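/- If n ≥ 1 is a non-negative integer linear combination of evil numbers each at least m, then n can be written as a sum of one, two, or three evil numbers each at least m. -/

import Mathlib

set_option maxRecDepth 40000
set_option maxHeartbeats 2000000

/-- A natural number is evil if its binary digit sum is even. -/
def IsEvil (k : ℕ) : Prop := (Nat.digits 2 k).sum % 2 = 0

namespace EvilThree

def E (n : ℕ) : ℕ := (Nat.digits 2 n).sum % 2

lemma E_le (n : ℕ) : E n ≤ 1 := by unfold E; omega

lemma E_two_mul (x : ℕ) : E (2 * x) = E x := by
  rcases Nat.eq_zero_or_pos x with rfl | hx
  · rfl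
  · unfold E
    rw [Nat.digits_def' (by norm_num : (1:ℕ) < 2) (by omega : 0 < 2 * x)]
    rw [Nat.mul_mod_right, Nat.mul_div_cancel_left x (by norm_num : 0 < 2)]
    simp

lemma E_two_mul_add_one (x : ℕ) : E (2 * x + 1) = (E x + 1) % 2 := by
  unfold E
  rw [Nat.digits_def' (by norm_num : (1:ℕ) < 2) (by omega : 0 < 2 * x + 1)]
  have h1 : (2 * x + 1) % 2 = 1 := by omega
  have h2 : (2 * x + 1) / 2 = x := by omega
  rw [h1, h2, List.sum_cons]
  omega

def tm : ℕ → ℕ → ℕ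
  | 0, _ => 0
  | f + 1, n => if n = 0 then 0 else (n % 2 + tm f (n / 2)) % 2

lemma E_rec (n : ℕ) (hn : n ≠ 0) : E n = (n % 2 + E (n / 2)) % 2 := by
  have hle := E_le (n / 2)
  rcases (by omega : n % 2 = 0 ∨ n % 2 = 1) with h0 | h0
  · have h : n = 2 * (n / 2) := by omega
    conv_lhs => rw [h]
    rw [E_two_mul]; omega
  · have h : n = 2 * (n / 2) + 1 := by omega
    conv_lhs => rw [h]
    rw [E_two_mul_add_one]; omega

lemma tm_eq : ∀ f n, n ≤ f → tm f n = E n := by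
  intro f
  induction f with
  | zero => intro n hn; interval_cases n; simp [tm, E]
  | succ f ih =>
    intro n hn
    rcases Nat.eq_zero_or_pos n with rfl | hp
    · simp [tm, E]
    · have hne : n ≠ 0 := by omega
      have h1 : tm (f + 1) n = (n % 2 + tm f (n / 2)) % 2 := by
        simp [tm, hne]
      rw [h1, ih (n / 2) (by omega), ← E_rec n hne]

def chk (t m1 m2 m3 e1 e2 e3 a b c : ℕ) : Bool :=
  decide (m1 ≤ a) && decide (m2 ≤ b) && decide (m3 ≤ c) &&
  decide (a ≤ 128) && decide (b ≤ 128) && decide (c ≤ 128) &&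
  decide (tm 128 a = e1) && decide (tm 128 b = e2) && decide (tm 128 c = e3) &&
  decide (a + b + c = t)

lemma chk_sound {t m1 m2 m3 e1 e2 e3 a b c : ℕ}
    (h : chk t m1 m2 m3 e1 e2 e3 a b c = true) :
    m1 ≤ a ∧ m2 ≤ b ∧ m3 ≤ c ∧ E a = e1 ∧ E b = e2 ∧ E c = e3 ∧ a + b + c = t := by
  simp only [chk, Bool.and_eq_true, decide_eq_true_eq] at h
  obtain ⟨⟨⟨⟨⟨⟨⟨⟨⟨h1, h2⟩, h3⟩, h4⟩, h5⟩, h6⟩, h7⟩, h8⟩, h9⟩, h10⟩ := h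
  refine ⟨h1, h2, h3, ?_, ?_, ?_, h10⟩
  · rw [← tm_eq 128 a h4]; exact h7
  · rw [← tm_eq 128 b h5]; exact h8
  · rw [← tm_eq 128 c h6]; exact h9

def chkA (k : ℕ) (w : ℕ × ℕ × ℕ) : Bool :=
  chk (44 + k / 64)
    ((44 + k / 64 + 2 - (k / 32 % 2 + k / 16 % 2 + k / 8 % 2) -
        (k / 32 % 2 + k / 16 % 2 + k / 8 % 2 + 2) / 3) / 4 + k / 32 % 2)
    ((44 + k / 64 + 2 - (k / 32 % 2 + k / 16 % 2 + k / 8 % 2) -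
        (k / 32 % 2 + k / 16 % 2 + k / 8 % 2 + 2) / 3) / 4 + k / 16 % 2)
    ((44 + k / 64 + 2 - (k / 32 % 2 + k / 16 % 2 + k / 8 % 2) -
        (k / 32 % 2 + k / 16 % 2 + k / 8 % 2 + 2) / 3) / 4 + k / 8 % 2)
    (k / 4 % 2) (k / 2 % 2) (k % 2) w.1 w.2.1 w.2.2

def chkB (k : ℕ) (w : ℕ × ℕ × ℕ) : Bool :=
  chk (12 + k / 8)
    ((12 + k / 8) / 4 - (k / 4 % 2 + k / 2 % 2 + k % 2 + 2) / 3 + k / 4 % 2)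
    ((12 + k / 8) / 4 - (k / 4 % 2 + k / 2 % 2 + k % 2 + 2) / 3 + k / 2 % 2)
    ((12 + k / 8) / 4 - (k / 4 % 2 + k / 2 % 2 + k % 2 + 2) / 3 + k % 2)
    0 0 0 w.1 w.2.1 w.2.2

def runT (f : ℕ → ℕ × ℕ × ℕ → Bool) : ℕ → List (ℕ × ℕ × ℕ) → Bool
  | _, [] => true
  | k, w :: ws => f k w && runT f (k + 1) ws

lemma runT_sound (f : ℕ → ℕ × ℕ × ℕ → Bool) :
    ∀ (L : List (ℕ × ℕ × ℕ)) (k : ℕ), runT f k L = true →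
      ∀ j, k ≤ j → j < k + L.length → ∃ w, f j w = true := by
  intro L
  induction L with
  | nil => intro k _ j h1 h2; simp only [List.length_nil, Nat.add_zero] at h2; omega
  | cons w ws ih =>
    intro k hr j h1 h2
    have hr' : f k w = true ∧ runT f (k + 1) ws = true := by
      simpa [runT, Bool.and_eq_true] using hr
    rcases Nat.eq_or_lt_of_le h1 with rfl | hlt
    · exact ⟨w, hr'.1⟩
    · exact ih (k + 1) hr'.2 j hlt (by simp only [List.length_cons] at h2; omega)

def tblA0 : List (ℕ × ℕ × ℕ) := [(12, 12, 20), (12, 18, 14), (12, 14, 18), (12, 11, 21), (11, 15, 18), (11, 12, 21), (11, 13, 20), (11, 11, 22),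
  (12, 12, 20), (12, 18, 14), (12, 14, 18), (12, 11, 21), (11, 15, 18), (11, 12, 21), (11, 13, 20), (11, 11, 22),
  (12, 12, 20), (12, 18, 14), (12, 14, 18), (12, 13, 19), (11, 15, 18), (11, 12, 21), (11, 13, 20), (11, 14, 19),
  (10, 17, 17), (10, 12, 22), (10, 11, 23), (10, 13, 21), (11, 15, 18), (11, 12, 21), (11, 13, 20), (11, 11, 22),
  (12, 12, 20), (12, 18, 14), (12, 14, 18), (12, 11, 21), (14, 12, 18), (13, 12, 19), (13, 11, 20), (14, 11, 19),
  (12, 12, 20), (12, 10, 22), (12, 14, 18), (12, 11, 21), (11, 10, 23), (11, 12, 21), (11, 13, 20), (11, 11, 22),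
  (12, 12, 20), (12, 18, 14), (12, 14, 18), (12, 11, 21), (11, 15, 18), (11, 12, 21), (11, 13, 20), (11, 11, 22),
  (12, 12, 20), (12, 18, 14), (12, 14, 18), (12, 11, 21), (11, 15, 18), (11, 12, 21), (11, 13, 20), (11, 11, 22),
  (12, 15, 18), (12, 12, 21), (12, 13, 20), (12, 11, 22), (11, 17, 17), (11, 12, 22), (11, 11, 23), (11, 13, 21),
  (12, 15, 18), (12, 12, 21), (12, 13, 20), (12, 11, 22), (11, 17, 17), (11, 12, 22), (11, 11, 23), (11, 13, 21),
  (12, 15, 18), (12, 12, 21), (12, 13, 20), (12, 14, 19), (11, 17, 17), (11, 12, 22), (11, 14, 20), (11, 13, 21),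
  (12, 15, 18), (12, 12, 21), (12, 13, 20), (12, 14, 19), (11, 17, 17), (11, 12, 22), (11, 14, 20), (11, 13, 21),
  (12, 15, 18), (12, 12, 21), (12, 13, 20), (12, 11, 22), (13, 12, 20), (13, 18, 14), (13, 14, 18), (13, 11, 21),
  (12, 15, 18), (12, 12, 21), (12, 13, 20), (12, 11, 22), (13, 12, 20), (13, 18, 14), (13, 14, 18), (13, 11, 21),
  (12, 15, 18), (12, 12, 21), (12, 13, 20), (12, 14, 19), (13, 12, 20), (13, 18, 14), (13, 14, 18), (13, 13, 19),
  (12, 15, 18), (12, 12, 21), (12, 13, 20), (12, 11, 22), (11, 17, 17), (11, 12, 22), (11, 11, 23), (11, 13, 21),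
  (12, 17, 17), (12, 12, 22), (12, 14, 20), (12, 13, 21), (13, 15, 18), (13, 12, 21), (13, 13, 20), (13, 14, 19),
  (12, 17, 17), (12, 12, 22), (12, 11, 23), (12, 13, 21), (11, 12, 23), (13, 12, 21), (11, 11, 24), (11, 13, 22),
  (12, 17, 17), (12, 12, 22), (12, 14, 20), (12, 13, 21), (11, 12, 23), (11, 24, 11), (13, 13, 20), (11, 13, 22),
  (12, 17, 17), (12, 12, 22), (12, 14, 20), (12, 13, 21), (11, 12, 23), (13, 12, 21), (13, 13, 20), (11, 13, 22),
  (12, 17, 17), (12, 12, 22), (12, 11, 23), (12, 13, 21), (13, 15, 18), (13, 12, 21), (13, 13, 20), (13, 11, 22),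
  (12, 17, 17), (12, 12, 22), (12, 11, 23), (12, 13, 21), (13, 15, 18), (13, 12, 21), (13, 13, 20), (13, 11, 22),
  (12, 17, 17), (12, 12, 22), (12, 14, 20), (12, 13, 21), (13, 15, 18), (13, 12, 21), (13, 13, 20), (13, 14, 19),
  (12, 17, 17), (12, 12, 22), (12, 14, 20), (12, 13, 21)]

def tblA1 : List (ℕ × ℕ × ℕ) := [(13, 15, 18), (13, 12, 21), (13, 13, 20), (13, 14, 19), (12, 12, 23), (15, 18, 14), (15, 14, 18), (12, 13, 22),
  (13, 17, 17), (13, 12, 22), (13, 14, 20), (13, 13, 21), (12, 12, 23), (15, 18, 14), (12, 11, 24), (12, 13, 22),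
  (11, 12, 24), (11, 15, 21), (11, 13, 23), (11, 11, 25), (12, 12, 23), (12, 24, 11), (15, 14, 18), (12, 13, 22),
  (11, 12, 24), (11, 15, 21), (11, 13, 23), (11, 14, 22), (12, 12, 23), (15, 18, 14), (15, 14, 18), (12, 13, 22),
  (11, 12, 24), (11, 15, 21), (11, 13, 23), (11, 14, 22), (12, 12, 23), (12, 24, 11), (12, 11, 24), (12, 13, 22),
  (13, 17, 17), (13, 12, 22), (13, 11, 23), (13, 13, 21), (12, 12, 23), (15, 18, 14), (12, 11, 24), (12, 13, 22),
  (13, 17, 17), (13, 12, 22), (13, 11, 23), (13, 13, 21), (12, 12, 23), (12, 24, 11), (15, 14, 18), (12, 13, 22),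
  (13, 17, 17), (13, 12, 22), (13, 14, 20), (13, 13, 21), (12, 12, 23), (15, 18, 14), (15, 14, 18), (12, 13, 22),
  (13, 17, 17), (13, 12, 22), (13, 14, 20), (13, 13, 21), (12, 12, 24), (12, 15, 21), (12, 13, 23), (12, 14, 22),
  (13, 12, 23), (14, 12, 22), (14, 14, 20), (13, 13, 22), (12, 12, 24), (12, 15, 21), (12, 13, 23), (12, 14, 22),
  (13, 12, 23), (14, 12, 22), (14, 14, 20), (13, 13, 22), (12, 18, 18), (12, 15, 21), (12, 13, 23), (12, 14, 22),
  (13, 15, 20), (14, 15, 19), (14, 14, 20), (13, 13, 22), (12, 12, 24), (12, 15, 21), (12, 13, 23), (12, 14, 22),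
  (11, 17, 20), (11, 12, 25), (11, 13, 24), (11, 16, 21), (15, 15, 18), (15, 12, 21), (15, 13, 20), (15, 14, 19),
  (13, 12, 23), (14, 12, 22), (14, 14, 20), (13, 13, 22), (12, 12, 24), (12, 15, 21), (12, 13, 23), (12, 11, 25),
  (13, 12, 23), (14, 12, 22), (13, 11, 24), (13, 13, 22), (12, 12, 24), (12, 15, 21), (12, 13, 23), (12, 14, 22),
  (13, 12, 23), (13, 24, 11), (14, 14, 20), (13, 13, 22), (12, 12, 24), (12, 15, 21), (12, 13, 23), (12, 14, 22),
  (13, 12, 23), (14, 12, 22), (14, 14, 20), (13, 13, 22), (12, 17, 20), (12, 12, 25), (12, 13, 24), (12, 16, 21),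
  (13, 12, 24), (13, 15, 21), (13, 13, 23), (13, 14, 22), (12, 17, 20), (12, 12, 25), (12, 13, 24), (12, 16, 21),
  (13, 12, 24), (13, 15, 21), (13, 13, 23), (13, 14, 22), (12, 17, 20), (12, 15, 22), (12, 13, 24), (12, 16, 21),
  (13, 18, 18), (13, 15, 21), (13, 13, 23), (13, 14, 22), (12, 17, 20), (12, 15, 22), (12, 13, 24), (12, 16, 21),
  (13, 18, 18), (13, 15, 21), (13, 13, 23), (13, 14, 22), (15, 17, 17), (15, 12, 22), (15, 14, 20), (15, 13, 21),
  (13, 12, 24), (13, 15, 21), (13, 13, 23), (13, 14, 22), (15, 17, 17), (15, 12, 22), (15, 14, 20), (15, 13, 21),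
  (13, 12, 24), (13, 15, 21), (13, 13, 23), (13, 14, 22), (15, 17, 17), (15, 15, 19), (15, 14, 20), (15, 13, 21),
  (13, 18, 18), (13, 15, 21), (13, 13, 23), (13, 14, 22)]

def tblA2 : List (ℕ × ℕ × ℕ) := [(12, 17, 20), (12, 12, 25), (12, 13, 24), (12, 16, 21), (13, 12, 24), (13, 15, 21), (13, 13, 23), (13, 14, 22),
  (15, 15, 20), (17, 17, 16), (17, 13, 20), (15, 13, 22), (13, 17, 20), (13, 15, 22), (13, 13, 24), (13, 16, 21),
  (12, 15, 23), (12, 12, 26), (12, 14, 24), (12, 13, 25), (13, 17, 20), (13, 12, 25), (13, 13, 24), (13, 16, 21),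
  (12, 15, 23), (12, 17, 21), (12, 14, 24), (12, 13, 25), (13, 17, 20), (13, 15, 22), (13, 13, 24), (13, 16, 21),
  (12, 15, 23), (12, 17, 21), (12, 14, 24), (12, 13, 25), (13, 17, 20), (13, 15, 22), (13, 13, 24), (13, 16, 21),
  (15, 12, 23), (17, 12, 21), (17, 13, 20), (15, 13, 22), (13, 17, 20), (13, 12, 25), (13, 13, 24), (13, 16, 21),
  (15, 12, 23), (17, 12, 21), (17, 13, 20), (15, 13, 22), (13, 17, 20), (13, 12, 25), (13, 13, 24), (13, 16, 21),
  (15, 15, 20), (17, 17, 16), (17, 13, 20), (15, 13, 22), (13, 17, 20), (13, 15, 22), (13, 13, 24), (13, 16, 21),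
  (15, 15, 20), (17, 17, 16), (17, 13, 20), (15, 13, 22), (13, 17, 20), (13, 15, 22), (13, 13, 24), (13, 16, 21),
  (15, 18, 18), (15, 15, 21), (15, 13, 23), (15, 14, 22), (13, 15, 23), (13, 17, 21), (13, 14, 24), (13, 13, 25),
  (12, 12, 27), (12, 17, 22), (12, 16, 23), (12, 13, 26), (13, 15, 23), (13, 12, 26), (13, 14, 24), (13, 13, 25),
  (12, 15, 24), (12, 17, 22), (12, 16, 23), (12, 13, 26), (13, 15, 23), (13, 17, 21), (13, 14, 24), (13, 13, 25),
  (12, 15, 24), (12, 17, 22), (12, 16, 23), (12, 13, 26), (13, 15, 23), (13, 17, 21), (13, 14, 24), (13, 13, 25),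
  (15, 12, 24), (15, 15, 21), (15, 13, 23), (15, 14, 22), (13, 15, 23), (13, 12, 26), (13, 14, 24), (13, 13, 25),
  (15, 12, 24), (15, 15, 21), (15, 13, 23), (15, 14, 22), (13, 15, 23), (13, 12, 26), (13, 14, 24), (13, 13, 25),
  (15, 18, 18), (15, 15, 21), (15, 13, 23), (15, 14, 22), (13, 15, 23), (13, 17, 21), (13, 14, 24), (13, 13, 25),
  (15, 18, 18), (15, 15, 21), (15, 13, 23), (15, 14, 22), (13, 15, 23), (13, 17, 21), (13, 14, 24), (13, 13, 25),
  (15, 17, 20), (15, 15, 22), (15, 13, 24), (15, 16, 21), (13, 15, 24), (13, 17, 22), (13, 16, 23), (13, 13, 26),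
  (15, 17, 20), (15, 15, 22), (15, 13, 24), (15, 16, 21), (13, 15, 24), (13, 17, 22), (13, 16, 23), (13, 13, 26),
  (15, 17, 20), (15, 15, 22), (15, 14, 23), (15, 16, 21), (13, 15, 24), (13, 17, 22), (13, 16, 23), (13, 14, 25),
  (12, 17, 23), (12, 15, 25), (12, 13, 27), (12, 14, 26), (13, 15, 24), (13, 17, 22), (13, 16, 23), (13, 13, 26),
  (15, 17, 20), (15, 15, 22), (15, 13, 24), (15, 16, 21), (14, 15, 23), (14, 17, 21), (14, 14, 24), (14, 13, 25),
  (15, 17, 20), (15, 12, 25), (15, 13, 24), (15, 16, 21), (13, 12, 27), (13, 17, 22), (13, 16, 23), (13, 13, 26),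
  (15, 17, 20), (15, 15, 22), (15, 13, 24), (15, 16, 21)]

def tblA3 : List (ℕ × ℕ × ℕ) := [(13, 15, 24), (13, 17, 22), (13, 16, 23), (13, 13, 26), (15, 17, 20), (15, 15, 22), (15, 13, 24), (15, 16, 21),
  (13, 15, 24), (13, 17, 22), (13, 16, 23), (13, 13, 26), (15, 15, 23), (15, 17, 21), (15, 14, 24), (15, 13, 25),
  (13, 17, 23), (13, 15, 25), (13, 13, 27), (13, 14, 26), (15, 15, 23), (15, 17, 21), (15, 14, 24), (15, 13, 25),
  (13, 17, 23), (13, 15, 25), (13, 13, 27), (13, 14, 26), (15, 15, 23), (15, 17, 21), (15, 14, 24), (15, 16, 22),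
  (13, 17, 23), (13, 15, 25), (13, 16, 24), (13, 14, 26), (15, 15, 23), (15, 17, 21), (15, 14, 24), (15, 16, 22),
  (13, 17, 23), (13, 15, 25), (13, 16, 24), (13, 14, 26), (15, 15, 23), (15, 17, 21), (15, 14, 24), (15, 13, 25),
  (14, 15, 24), (14, 17, 22), (14, 16, 23), (14, 13, 26), (15, 15, 23), (15, 17, 21), (15, 14, 24), (15, 13, 25),
  (14, 15, 24), (14, 17, 22), (14, 16, 23), (14, 13, 26), (15, 15, 23), (15, 17, 21), (15, 14, 24), (15, 16, 22),
  (14, 15, 24), (14, 17, 22), (14, 16, 23), (14, 14, 25), (15, 15, 23), (15, 17, 21), (15, 14, 24), (15, 13, 25),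
  (13, 17, 23), (13, 15, 25), (13, 13, 27), (13, 14, 26), (15, 15, 24), (15, 17, 22), (15, 16, 23), (15, 14, 25),
  (14, 17, 23), (14, 15, 25), (14, 16, 24), (14, 14, 26), (15, 15, 24), (15, 17, 22), (15, 16, 23), (15, 13, 26),
  (13, 17, 24), (13, 15, 26), (13, 14, 27), (13, 13, 28), (15, 15, 24), (15, 17, 22), (15, 16, 23), (15, 14, 25),
  (13, 17, 24), (13, 15, 26), (13, 14, 27), (13, 16, 25), (15, 15, 24), (15, 17, 22), (15, 16, 23), (15, 14, 25),
  (13, 17, 24), (13, 15, 26), (13, 14, 27), (13, 16, 25), (15, 15, 24), (15, 17, 22), (15, 16, 23), (15, 13, 26),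
  (14, 17, 23), (14, 15, 25), (14, 13, 27), (14, 14, 26), (15, 15, 24), (15, 17, 22), (15, 16, 23), (15, 13, 26),
  (14, 17, 23), (14, 15, 25), (14, 13, 27), (14, 14, 26), (15, 15, 24), (15, 17, 22), (15, 16, 23), (15, 14, 25),
  (14, 17, 23), (14, 15, 25), (14, 16, 24), (14, 14, 26), (15, 15, 24), (15, 17, 22), (15, 16, 23), (15, 14, 25),
  (14, 17, 23), (14, 15, 25), (14, 16, 24), (14, 14, 26), (15, 17, 23), (15, 15, 25), (15, 16, 24), (15, 14, 26),
  (14, 17, 24), (14, 15, 26), (14, 14, 27), (14, 16, 25), (15, 17, 23), (15, 15, 25), (15, 13, 27), (15, 14, 26),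
  (13, 15, 27), (13, 17, 25), (13, 13, 29), (13, 14, 28), (15, 17, 23), (15, 15, 25), (15, 16, 24), (15, 14, 26),
  (13, 15, 27), (13, 17, 25), (13, 19, 23), (13, 14, 28), (15, 17, 23), (15, 15, 25), (15, 16, 24), (15, 14, 26),
  (13, 15, 27), (13, 17, 25), (13, 19, 23), (13, 14, 28), (15, 17, 23), (15, 15, 25), (15, 13, 27), (15, 14, 26),
  (14, 17, 24), (14, 15, 26), (14, 14, 27), (14, 13, 28), (15, 17, 23), (15, 15, 25), (15, 13, 27), (15, 14, 26),
  (14, 17, 24), (14, 15, 26), (14, 14, 27), (14, 13, 28)]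

def tblA4 : List (ℕ × ℕ × ℕ) := [(15, 17, 23), (15, 15, 25), (15, 16, 24), (15, 14, 26), (14, 17, 24), (14, 15, 26), (14, 14, 27), (14, 16, 25),
  (15, 17, 23), (15, 15, 25), (15, 16, 24), (15, 14, 26), (14, 17, 24), (14, 15, 26), (14, 14, 27), (14, 16, 25),
  (15, 17, 24), (15, 15, 26), (15, 14, 27), (15, 16, 25), (14, 15, 27), (14, 17, 25), (14, 19, 23), (14, 14, 28),
  (15, 17, 24), (15, 15, 26), (15, 14, 27), (15, 16, 25), (14, 15, 27), (14, 17, 25), (14, 19, 23), (14, 14, 28),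
  (15, 17, 24), (15, 15, 26), (15, 21, 20), (15, 16, 25), (14, 15, 27), (14, 17, 25), (14, 19, 23), (14, 16, 26),
  (15, 17, 24), (15, 15, 26), (15, 14, 27), (15, 16, 25), (13, 20, 23), (13, 15, 28), (13, 14, 29), (13, 21, 22),
  (15, 17, 24), (15, 15, 26), (15, 14, 27), (15, 16, 25), (16, 17, 23), (16, 15, 25), (16, 16, 24), (16, 14, 26),
  (15, 17, 24), (15, 15, 26), (15, 14, 27), (15, 13, 28), (14, 15, 27), (14, 17, 25), (14, 13, 29), (14, 14, 28),
  (15, 17, 24), (15, 15, 26), (15, 14, 27), (15, 16, 25), (14, 15, 27), (14, 17, 25), (14, 19, 23), (14, 14, 28),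
  (15, 17, 24), (15, 15, 26), (15, 14, 27), (15, 16, 25), (14, 15, 27), (14, 17, 25), (14, 19, 23), (14, 14, 28),
  (15, 15, 27), (15, 17, 25), (15, 19, 23), (15, 14, 28), (14, 20, 23), (14, 15, 28), (14, 14, 29), (14, 21, 22),
  (15, 15, 27), (15, 17, 25), (15, 19, 23), (15, 14, 28), (14, 20, 23), (14, 15, 28), (14, 14, 29), (14, 21, 22),
  (15, 15, 27), (15, 17, 25), (15, 19, 23), (15, 16, 26), (14, 20, 23), (14, 15, 28), (14, 16, 27), (14, 21, 22),
  (15, 15, 27), (15, 17, 25), (15, 19, 23), (15, 16, 26), (14, 20, 23), (14, 15, 28), (14, 16, 27), (14, 21, 22),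
  (15, 15, 27), (15, 17, 25), (15, 19, 23), (15, 14, 28), (16, 17, 24), (16, 15, 26), (16, 14, 27), (16, 16, 25),
  (15, 15, 27), (15, 17, 25), (15, 19, 23), (15, 14, 28), (16, 17, 24), (16, 15, 26), (16, 14, 27), (16, 16, 25),
  (15, 15, 27), (15, 17, 25), (15, 19, 23), (15, 16, 26), (16, 17, 24), (16, 15, 26), (16, 21, 20), (16, 16, 25),
  (15, 15, 27), (15, 17, 25), (15, 19, 23), (15, 14, 28), (14, 20, 23), (14, 15, 28), (14, 14, 29), (14, 21, 22),
  (15, 20, 23), (15, 15, 28), (15, 16, 27), (15, 21, 22), (16, 15, 27), (16, 17, 25), (16, 19, 23), (16, 16, 26),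
  (15, 20, 23), (15, 15, 28), (15, 14, 29), (15, 21, 22), (14, 15, 29), (14, 18, 26), (14, 14, 30), (14, 16, 28),
  (15, 20, 23), (15, 15, 28), (15, 16, 27), (15, 21, 22), (14, 15, 29), (14, 18, 26), (14, 21, 23), (14, 16, 28),
  (15, 20, 23), (15, 15, 28), (15, 16, 27), (15, 21, 22), (14, 15, 29), (14, 18, 26), (14, 21, 23), (14, 16, 28),
  (15, 20, 23), (15, 15, 28), (15, 14, 29), (15, 21, 22), (16, 15, 27), (16, 17, 25), (16, 19, 23), (16, 14, 28),
  (15, 20, 23), (15, 15, 28), (15, 14, 29), (15, 21, 22)]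

def tblA5 : List (ℕ × ℕ × ℕ) := [(16, 15, 27), (16, 17, 25), (16, 19, 23), (16, 14, 28), (15, 20, 23), (15, 15, 28), (15, 16, 27), (15, 21, 22),
  (16, 15, 27), (16, 17, 25), (16, 19, 23), (16, 16, 26), (15, 20, 23), (15, 15, 28), (15, 16, 27), (15, 21, 22),
  (16, 15, 27), (16, 17, 25), (16, 19, 23), (16, 16, 26), (15, 15, 29), (15, 18, 26), (15, 21, 23), (15, 16, 28),
  (16, 20, 23), (16, 15, 28), (16, 16, 27), (16, 21, 22), (15, 15, 29), (15, 18, 26), (15, 14, 30), (15, 16, 28),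
  (14, 15, 30), (14, 17, 28), (14, 16, 29), (14, 14, 31), (15, 15, 29), (15, 18, 26), (15, 21, 23), (15, 16, 28),
  (14, 15, 30), (14, 17, 28), (14, 16, 29), (14, 19, 26), (15, 15, 29), (15, 18, 26), (15, 21, 23), (15, 16, 28),
  (14, 15, 30), (14, 17, 28), (14, 16, 29), (14, 19, 26), (15, 15, 29), (15, 18, 26), (15, 14, 30), (15, 16, 28),
  (16, 20, 23), (16, 15, 28), (16, 14, 29), (16, 21, 22), (15, 15, 29), (15, 18, 26), (15, 14, 30), (15, 16, 28),
  (16, 20, 23), (16, 15, 28), (16, 14, 29), (16, 21, 22), (15, 15, 29), (15, 18, 26), (15, 21, 23), (15, 16, 28),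
  (16, 20, 23), (16, 15, 28), (16, 16, 27), (16, 21, 22), (15, 15, 29), (15, 18, 26), (15, 21, 23), (15, 16, 28),
  (16, 20, 23), (16, 15, 28), (16, 16, 27), (16, 21, 22), (15, 15, 30), (15, 17, 28), (15, 16, 29), (15, 19, 26),
  (16, 15, 29), (16, 18, 26), (16, 21, 23), (16, 16, 28), (15, 15, 30), (15, 17, 28), (15, 16, 29), (15, 19, 26),
  (16, 15, 29), (16, 18, 26), (16, 21, 23), (16, 16, 28), (15, 18, 27), (15, 17, 28), (15, 16, 29), (15, 19, 26),
  (16, 17, 27), (16, 18, 26), (16, 21, 23), (16, 16, 28), (15, 15, 30), (15, 17, 28), (15, 16, 29), (15, 19, 26),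
  (14, 17, 29), (14, 15, 31), (14, 16, 30), (14, 21, 25), (17, 20, 23), (17, 15, 28), (17, 16, 27), (17, 21, 22),
  (16, 15, 29), (16, 18, 26), (16, 21, 23), (16, 16, 28), (15, 15, 30), (15, 17, 28), (15, 16, 29), (15, 14, 31),
  (16, 15, 29), (16, 18, 26), (16, 14, 30), (16, 16, 28), (15, 15, 30), (15, 17, 28), (15, 16, 29), (15, 19, 26),
  (16, 15, 29), (16, 18, 26), (16, 21, 23), (16, 16, 28), (15, 15, 30), (15, 17, 28), (15, 16, 29), (15, 19, 26),
  (16, 15, 29), (16, 18, 26), (16, 21, 23), (16, 16, 28), (15, 17, 29), (15, 15, 31), (15, 16, 30), (15, 21, 25),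
  (16, 15, 30), (16, 17, 28), (16, 16, 29), (16, 19, 26), (15, 17, 29), (15, 15, 31), (15, 16, 30), (15, 21, 25),
  (16, 15, 30), (16, 17, 28), (16, 16, 29), (16, 19, 26), (15, 17, 29), (15, 18, 28), (15, 16, 30), (15, 21, 25),
  (16, 18, 27), (16, 17, 28), (16, 16, 29), (16, 19, 26), (15, 17, 29), (15, 18, 28), (15, 16, 30), (15, 21, 25),
  (16, 18, 27), (16, 17, 28), (16, 16, 29), (16, 19, 26), (17, 15, 29), (17, 18, 26), (17, 21, 23), (17, 16, 28),
  (16, 15, 30), (16, 17, 28), (16, 16, 29), (16, 19, 26)]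

def tblA6 : List (ℕ × ℕ × ℕ) := [(17, 15, 29), (17, 18, 26), (17, 21, 23), (17, 16, 28), (16, 15, 30), (16, 17, 28), (16, 16, 29), (16, 19, 26),
  (17, 17, 27), (17, 18, 26), (17, 21, 23), (17, 16, 28), (16, 18, 27), (16, 17, 28), (16, 16, 29), (16, 19, 26),
  (15, 17, 29), (15, 15, 31), (15, 16, 30), (15, 21, 25), (16, 15, 30), (16, 17, 28), (16, 16, 29), (16, 19, 26),
  (17, 18, 27), (17, 17, 28), (17, 16, 29), (17, 19, 26), (16, 17, 29), (16, 18, 28), (16, 16, 30), (16, 21, 25),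
  (15, 17, 30), (15, 15, 32), (17, 16, 29), (15, 16, 31), (16, 17, 29), (16, 15, 31), (16, 16, 30), (16, 21, 25),
  (15, 17, 30), (17, 17, 28), (15, 32, 15), (15, 16, 31), (16, 17, 29), (16, 18, 28), (16, 16, 30), (16, 21, 25),
  (15, 17, 30), (17, 17, 28), (17, 16, 29), (15, 16, 31), (16, 17, 29), (16, 18, 28), (16, 16, 30), (16, 21, 25),
  (17, 15, 30), (17, 17, 28), (17, 16, 29), (17, 19, 26), (16, 17, 29), (16, 15, 31), (16, 16, 30), (16, 21, 25),
  (17, 15, 30), (17, 17, 28), (17, 16, 29), (17, 19, 26), (16, 17, 29), (16, 15, 31), (16, 16, 30), (16, 21, 25),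
  (17, 18, 27), (17, 17, 28), (17, 16, 29), (17, 19, 26), (16, 17, 29), (16, 18, 28), (16, 16, 30), (16, 21, 25),
  (17, 18, 27), (17, 17, 28), (17, 16, 29), (17, 19, 26), (16, 17, 29), (16, 18, 28), (16, 16, 30), (16, 21, 25),
  (17, 17, 29), (17, 18, 28), (17, 16, 30), (17, 21, 25), (16, 17, 30), (19, 18, 26), (19, 21, 23), (16, 16, 31),
  (15, 15, 33), (15, 17, 31), (15, 19, 29), (15, 16, 32), (16, 17, 30), (16, 15, 32), (19, 21, 23), (16, 16, 31),
  (15, 18, 30), (15, 17, 31), (15, 19, 29), (15, 16, 32), (16, 17, 30), (19, 18, 26), (16, 32, 15), (16, 16, 31),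
  (15, 18, 30), (15, 17, 31), (15, 19, 29), (15, 16, 32), (16, 17, 30), (19, 18, 26), (19, 21, 23), (16, 16, 31),
  (17, 17, 29), (17, 15, 31), (17, 16, 30), (17, 21, 25), (16, 17, 30), (16, 15, 32), (16, 32, 15), (16, 16, 31),
  (17, 17, 29), (17, 15, 31), (17, 16, 30), (17, 21, 25), (16, 17, 30), (16, 15, 32), (19, 21, 23), (16, 16, 31),
  (17, 17, 29), (17, 18, 28), (17, 16, 30), (17, 21, 25), (16, 17, 30), (19, 18, 26), (16, 32, 15), (16, 16, 31),
  (17, 17, 29), (17, 18, 28), (17, 16, 30), (17, 21, 25), (16, 17, 30), (19, 18, 26), (19, 21, 23), (16, 16, 31),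
  (17, 17, 30), (18, 18, 28), (18, 16, 30), (17, 16, 31), (16, 18, 30), (16, 17, 31), (16, 19, 29), (16, 16, 32),
  (17, 17, 30), (18, 18, 28), (18, 16, 30), (17, 16, 31), (16, 18, 30), (16, 17, 31), (16, 19, 29), (16, 16, 32),
  (17, 17, 30), (18, 18, 28), (18, 19, 27), (17, 19, 28), (16, 18, 30), (16, 17, 31), (16, 19, 29), (16, 22, 26),
  (15, 20, 29), (15, 17, 32), (15, 16, 33), (15, 21, 28), (16, 18, 30), (16, 17, 31), (16, 19, 29), (16, 16, 32),
  (17, 17, 30), (18, 18, 28), (18, 16, 30), (17, 16, 31)]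

def tblA7 : List (ℕ × ℕ × ℕ) := [(19, 18, 27), (19, 17, 28), (19, 16, 29), (19, 19, 26), (17, 17, 30), (17, 15, 32), (18, 16, 30), (17, 16, 31),
  (16, 15, 33), (16, 17, 31), (16, 19, 29), (16, 16, 32), (17, 17, 30), (18, 18, 28), (17, 32, 15), (17, 16, 31),
  (16, 18, 30), (16, 17, 31), (16, 19, 29), (16, 16, 32), (17, 17, 30), (18, 18, 28), (18, 16, 30), (17, 16, 31),
  (16, 18, 30), (16, 17, 31), (16, 19, 29), (16, 16, 32), (17, 18, 30), (17, 17, 31), (17, 19, 29), (17, 16, 32),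
  (16, 20, 29), (16, 17, 32), (16, 16, 33), (16, 21, 28), (17, 18, 30), (17, 17, 31), (17, 19, 29), (17, 16, 32),
  (16, 20, 29), (16, 17, 32), (16, 16, 33), (16, 21, 28), (17, 18, 30), (17, 17, 31), (17, 19, 29), (17, 22, 26),
  (16, 20, 29), (16, 17, 32), (16, 19, 30), (16, 21, 28), (17, 18, 30), (17, 17, 31), (17, 19, 29), (17, 22, 26),
  (16, 20, 29), (16, 17, 32), (16, 19, 30), (16, 21, 28), (17, 18, 30), (17, 17, 31), (17, 19, 29), (17, 16, 32),
  (19, 17, 29), (19, 18, 28), (19, 16, 30), (19, 21, 25), (17, 18, 30), (17, 17, 31), (17, 19, 29), (17, 16, 32),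
  (19, 17, 29), (19, 18, 28), (19, 16, 30), (19, 21, 25), (17, 18, 30), (17, 17, 31), (17, 19, 29), (17, 22, 26),
  (19, 17, 29), (19, 18, 28), (19, 19, 27), (19, 21, 25), (17, 18, 30), (17, 17, 31), (17, 19, 29), (17, 16, 32),
  (16, 20, 29), (16, 17, 32), (16, 16, 33), (16, 21, 28), (17, 20, 29), (17, 17, 32), (17, 19, 30), (17, 21, 28),
  (19, 17, 30), (21, 17, 28), (21, 21, 24), (19, 19, 28), (17, 20, 29), (17, 17, 32), (17, 16, 33), (17, 21, 28),
  (16, 17, 33), (16, 18, 32), (16, 16, 34), (16, 19, 31), (17, 20, 29), (17, 17, 32), (17, 19, 30), (17, 21, 28),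
  (16, 17, 33), (16, 18, 32), (16, 21, 29), (16, 19, 31), (17, 20, 29), (17, 17, 32), (17, 19, 30), (17, 21, 28),
  (16, 17, 33), (16, 18, 32), (16, 21, 29), (16, 19, 31), (17, 20, 29), (17, 17, 32), (17, 16, 33), (17, 21, 28),
  (19, 17, 30), (21, 17, 28), (21, 16, 29), (19, 16, 31), (17, 20, 29), (17, 17, 32), (17, 16, 33), (17, 21, 28),
  (19, 17, 30), (21, 17, 28), (21, 16, 29), (19, 16, 31), (17, 20, 29), (17, 17, 32), (17, 19, 30), (17, 21, 28),
  (19, 17, 30), (21, 17, 28), (21, 21, 24), (19, 19, 28), (17, 20, 29), (17, 17, 32), (17, 19, 30), (17, 21, 28),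
  (19, 17, 30), (21, 17, 28), (21, 21, 24), (19, 19, 28), (17, 17, 33), (17, 18, 32), (17, 21, 29), (17, 19, 31),
  (19, 18, 30), (19, 17, 31), (19, 19, 29), (19, 22, 26), (17, 17, 33), (17, 18, 32), (17, 16, 34), (17, 19, 31),
  (16, 17, 34), (16, 20, 31), (16, 21, 30), (16, 16, 35), (17, 17, 33), (17, 18, 32), (17, 21, 29), (17, 19, 31),
  (16, 17, 34), (16, 20, 31), (16, 21, 30), (16, 19, 32), (17, 17, 33), (17, 18, 32), (17, 21, 29), (17, 19, 31),
  (16, 17, 34), (16, 20, 31), (16, 21, 30), (16, 19, 32)]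

def tblA8 : List (ℕ × ℕ × ℕ) := [(17, 17, 33), (17, 18, 32), (17, 16, 34), (17, 19, 31), (19, 18, 30), (19, 17, 31), (19, 19, 29), (19, 16, 32),
  (17, 17, 33), (17, 18, 32), (17, 16, 34), (17, 19, 31), (19, 18, 30), (19, 17, 31), (19, 19, 29), (19, 16, 32),
  (17, 17, 33), (17, 18, 32), (17, 21, 29), (17, 19, 31), (19, 18, 30), (19, 17, 31), (19, 19, 29), (19, 22, 26),
  (17, 17, 33), (17, 18, 32), (17, 21, 29), (17, 19, 31), (19, 18, 30), (19, 17, 31), (19, 19, 29), (19, 22, 26),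
  (17, 17, 34), (17, 20, 31), (17, 21, 30), (17, 19, 32), (19, 20, 29), (19, 17, 32), (19, 19, 30), (19, 21, 28),
  (17, 17, 34), (17, 20, 31), (17, 21, 30), (17, 19, 32), (19, 20, 29), (19, 17, 32), (19, 19, 30), (19, 21, 28),
  (17, 18, 33), (17, 20, 31), (17, 21, 30), (17, 19, 32), (19, 20, 29), (19, 18, 31), (19, 19, 30), (19, 21, 28),
  (17, 17, 34), (17, 20, 31), (17, 21, 30), (17, 19, 32), (16, 18, 34), (16, 17, 35), (16, 19, 33), (16, 21, 31),
  (18, 17, 33), (18, 18, 32), (18, 21, 29), (18, 19, 31), (19, 20, 29), (19, 17, 32), (19, 19, 30), (19, 21, 28),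
  (17, 17, 34), (17, 20, 31), (17, 21, 30), (17, 16, 35), (19, 20, 29), (19, 17, 32), (19, 16, 33), (19, 21, 28),
  (17, 17, 34), (17, 20, 31), (17, 21, 30), (17, 19, 32), (19, 20, 29), (19, 17, 32), (19, 19, 30), (19, 21, 28),
  (17, 17, 34), (17, 20, 31), (17, 21, 30), (17, 19, 32), (19, 20, 29), (19, 17, 32), (19, 19, 30), (19, 21, 28),
  (17, 18, 34), (17, 17, 35), (17, 19, 33), (17, 21, 31), (19, 17, 33), (19, 18, 32), (19, 21, 29), (19, 19, 31),
  (17, 18, 34), (17, 17, 35), (17, 19, 33), (17, 21, 31), (19, 17, 33), (19, 18, 32), (19, 21, 29), (19, 19, 31),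
  (17, 18, 34), (17, 20, 32), (17, 19, 33), (17, 21, 31), (19, 20, 30), (19, 18, 32), (19, 21, 29), (19, 19, 31),
  (17, 18, 34), (17, 20, 32), (17, 19, 33), (17, 21, 31), (19, 20, 30), (19, 18, 32), (19, 21, 29), (19, 19, 31),
  (18, 17, 34), (18, 20, 31), (18, 21, 30), (18, 19, 32), (19, 17, 33), (19, 18, 32), (19, 21, 29), (19, 19, 31),
  (18, 17, 34), (18, 20, 31), (18, 21, 30), (18, 19, 32), (19, 17, 33), (19, 18, 32), (19, 21, 29), (19, 19, 31),
  (18, 18, 33), (18, 20, 31), (18, 21, 30), (18, 19, 32), (19, 20, 30), (19, 18, 32), (19, 21, 29), (19, 19, 31),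
  (17, 18, 34), (17, 17, 35), (17, 19, 33), (17, 21, 31), (19, 17, 33), (19, 18, 32), (19, 21, 29), (19, 19, 31),
  (18, 18, 34), (18, 20, 32), (18, 19, 33), (18, 21, 31), (19, 18, 33), (19, 20, 31), (19, 21, 30), (19, 19, 32),
  (17, 17, 36), (17, 18, 35), (17, 19, 34), (17, 21, 32), (19, 17, 34), (19, 20, 31), (19, 21, 30), (19, 19, 32),
  (17, 20, 33), (17, 18, 35), (17, 19, 34), (17, 21, 32), (19, 18, 33), (19, 20, 31), (19, 21, 30), (19, 19, 32),
  (17, 20, 33), (17, 18, 35), (17, 19, 34), (17, 21, 32)]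

def tblA9 : List (ℕ × ℕ × ℕ) := [(19, 18, 33), (19, 20, 31), (19, 21, 30), (19, 19, 32), (18, 18, 34), (18, 17, 35), (18, 19, 33), (18, 21, 31),
  (19, 17, 34), (19, 20, 31), (19, 21, 30), (19, 19, 32), (18, 18, 34), (18, 17, 35), (18, 19, 33), (18, 21, 31),
  (19, 17, 34), (19, 20, 31), (19, 21, 30), (19, 19, 32), (18, 18, 34), (18, 20, 32), (18, 19, 33), (18, 21, 31),
  (19, 18, 33), (19, 20, 31), (19, 21, 30), (19, 19, 32), (18, 18, 34), (18, 20, 32), (18, 19, 33), (18, 21, 31),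
  (19, 18, 33), (19, 20, 31), (19, 21, 30), (19, 19, 32), (18, 20, 33), (18, 18, 35), (18, 19, 34), (18, 21, 32),
  (19, 18, 34), (19, 20, 32), (19, 19, 33), (19, 21, 31), (17, 18, 36), (17, 17, 37), (17, 21, 33), (17, 19, 35),
  (19, 18, 34), (19, 17, 35), (19, 19, 33), (19, 21, 31), (17, 18, 36), (17, 23, 31), (17, 21, 33), (17, 19, 35),
  (19, 18, 34), (19, 20, 32), (19, 19, 33), (19, 21, 31), (17, 18, 36), (17, 23, 31), (17, 21, 33), (17, 19, 35),
  (19, 18, 34), (19, 20, 32), (19, 19, 33), (19, 21, 31), (18, 17, 36), (18, 18, 35), (18, 19, 34), (18, 21, 32),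
  (19, 18, 34), (19, 17, 35), (19, 19, 33), (19, 21, 31), (18, 17, 36), (18, 18, 35), (18, 19, 34), (18, 21, 32),
  (19, 18, 34), (19, 17, 35), (19, 19, 33), (19, 21, 31), (18, 20, 33), (18, 18, 35), (18, 19, 34), (18, 21, 32),
  (19, 18, 34), (19, 20, 32), (19, 19, 33), (19, 21, 31), (18, 20, 33), (18, 18, 35), (18, 19, 34), (18, 21, 32),
  (19, 18, 34), (19, 20, 32), (19, 19, 33), (19, 21, 31), (18, 18, 36), (18, 23, 31), (18, 21, 33), (18, 19, 35),
  (19, 20, 33), (19, 18, 35), (19, 19, 34), (19, 21, 32), (18, 18, 36), (18, 23, 31), (18, 21, 33), (18, 19, 35),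
  (19, 20, 33), (19, 18, 35), (19, 19, 34), (19, 21, 32), (18, 20, 34), (18, 23, 31), (18, 21, 33), (18, 19, 35),
  (19, 20, 33), (19, 27, 26), (19, 19, 34), (19, 21, 32), (18, 18, 36), (17, 18, 37), (17, 19, 36), (18, 19, 35),
  (19, 20, 33), (19, 18, 35), (19, 19, 34), (19, 21, 32), (20, 18, 34), (20, 20, 32), (20, 19, 33), (20, 21, 31),
  (19, 20, 33), (19, 18, 35), (19, 19, 34), (19, 21, 32), (18, 18, 36), (18, 17, 37), (18, 21, 33), (18, 19, 35),
  (19, 17, 36), (19, 18, 35), (19, 19, 34), (19, 21, 32), (18, 18, 36), (18, 23, 31), (18, 21, 33), (18, 19, 35),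
  (19, 20, 33), (19, 18, 35), (19, 19, 34), (19, 21, 32), (18, 18, 36), (18, 23, 31), (18, 21, 33), (18, 19, 35),
  (19, 20, 33), (19, 18, 35), (19, 19, 34), (19, 21, 32), (20, 20, 33), (18, 18, 37), (18, 19, 36), (20, 21, 32),
  (19, 18, 36), (19, 23, 31), (19, 21, 33), (19, 19, 35), (20, 20, 33), (18, 18, 37), (18, 19, 36), (20, 21, 32),
  (19, 18, 36), (19, 23, 31), (19, 21, 33), (19, 19, 35), (20, 20, 33), (18, 20, 35), (18, 19, 36), (20, 21, 32),
  (19, 20, 34), (19, 23, 31), (19, 21, 33), (19, 19, 35)]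

def tblA10 : List (ℕ × ℕ × ℕ) := [(20, 20, 33), (18, 20, 35), (18, 19, 36), (20, 21, 32), (19, 20, 34), (19, 23, 31), (19, 21, 33), (19, 19, 35),
  (20, 20, 33), (20, 18, 35), (20, 19, 34), (20, 21, 32), (19, 18, 36), (19, 23, 31), (19, 21, 33), (19, 19, 35),
  (20, 20, 33), (20, 18, 35), (20, 19, 34), (20, 21, 32), (19, 18, 36), (19, 23, 31), (19, 21, 33), (19, 19, 35),
  (20, 20, 33), (20, 27, 26), (20, 19, 34), (20, 21, 32), (19, 20, 34), (19, 23, 31), (19, 21, 33), (19, 19, 35),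
  (20, 20, 33), (18, 18, 37), (18, 19, 36), (20, 21, 32), (19, 18, 36), (19, 23, 31), (19, 21, 33), (19, 19, 35),
  (20, 20, 34), (20, 23, 31), (20, 21, 33), (20, 19, 35), (21, 20, 33), (19, 20, 35), (19, 19, 36), (21, 21, 32),
  (18, 20, 36), (18, 18, 38), (18, 22, 34), (18, 19, 37), (21, 20, 33), (19, 18, 37), (19, 19, 36), (21, 21, 32),
  (18, 20, 36), (18, 24, 32), (18, 22, 34), (18, 19, 37), (21, 20, 33), (19, 20, 35), (19, 19, 36), (21, 21, 32),
  (18, 20, 36), (18, 24, 32), (18, 22, 34), (18, 19, 37), (21, 20, 33), (19, 20, 35), (19, 19, 36), (21, 21, 32),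
  (20, 18, 36), (20, 23, 31), (20, 21, 33), (20, 19, 35), (21, 20, 33), (19, 18, 37), (19, 19, 36), (21, 21, 32),
  (20, 18, 36), (20, 23, 31), (20, 21, 33), (20, 19, 35), (21, 20, 33), (19, 18, 37), (19, 19, 36), (21, 21, 32),
  (20, 20, 34), (20, 23, 31), (20, 21, 33), (20, 19, 35), (21, 20, 33), (19, 20, 35), (19, 19, 36), (21, 21, 32),
  (20, 20, 34), (20, 23, 31), (20, 21, 33), (20, 19, 35), (21, 20, 33), (19, 20, 35), (19, 19, 36), (21, 21, 32),
  (23, 23, 29), (20, 20, 35), (20, 19, 36), (23, 21, 31), (19, 20, 36), (19, 24, 32), (19, 22, 34), (19, 19, 37),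
  (18, 18, 39), (18, 20, 37), (18, 21, 36), (18, 19, 38), (19, 20, 36), (19, 18, 38), (19, 22, 34), (19, 19, 37),
  (18, 23, 34), (18, 20, 37), (18, 21, 36), (18, 19, 38), (19, 20, 36), (19, 24, 32), (19, 22, 34), (19, 19, 37),
  (18, 23, 34), (18, 20, 37), (18, 21, 36), (18, 19, 38), (19, 20, 36), (19, 24, 32), (19, 22, 34), (19, 19, 37),
  (23, 18, 34), (20, 18, 37), (20, 19, 36), (23, 21, 31), (19, 20, 36), (19, 18, 38), (19, 22, 34), (19, 19, 37),
  (23, 18, 34), (20, 18, 37), (20, 19, 36), (23, 21, 31), (19, 20, 36), (19, 18, 38), (19, 22, 34), (19, 19, 37),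
  (23, 23, 29), (20, 20, 35), (20, 19, 36), (23, 21, 31), (19, 20, 36), (19, 24, 32), (19, 22, 34), (19, 19, 37),
  (23, 23, 29), (20, 20, 35), (20, 19, 36), (23, 21, 31), (19, 20, 36), (19, 24, 32), (19, 22, 34), (19, 19, 37),
  (20, 20, 36), (20, 24, 32), (20, 22, 34), (20, 19, 37), (19, 23, 34), (19, 20, 37), (19, 21, 36), (19, 19, 38),
  (20, 20, 36), (20, 24, 32), (20, 22, 34), (20, 19, 37), (19, 23, 34), (19, 20, 37), (19, 21, 36), (19, 19, 38),
  (20, 20, 36), (20, 24, 32), (20, 22, 34), (20, 21, 35)]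

def tblA11 : List (ℕ × ℕ × ℕ) := [(19, 23, 34), (19, 20, 37), (19, 21, 36), (19, 22, 35), (18, 24, 34), (18, 20, 38), (18, 19, 39), (18, 21, 37),
  (19, 23, 34), (19, 20, 37), (19, 21, 36), (19, 19, 38), (20, 20, 36), (20, 24, 32), (20, 22, 34), (20, 19, 37),
  (22, 20, 34), (21, 20, 35), (21, 19, 36), (22, 19, 35), (20, 20, 36), (20, 18, 38), (20, 22, 34), (20, 19, 37),
  (19, 18, 39), (19, 20, 37), (19, 21, 36), (19, 19, 38), (20, 20, 36), (20, 24, 32), (20, 22, 34), (20, 19, 37),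
  (19, 23, 34), (19, 20, 37), (19, 21, 36), (19, 19, 38), (20, 20, 36), (20, 24, 32), (20, 22, 34), (20, 19, 37),
  (19, 23, 34), (19, 20, 37), (19, 21, 36), (19, 19, 38), (20, 23, 34), (20, 20, 37), (20, 21, 36), (20, 19, 38),
  (19, 24, 34), (19, 20, 38), (19, 19, 39), (19, 21, 37), (20, 23, 34), (20, 20, 37), (20, 21, 36), (20, 19, 38),
  (19, 24, 34), (19, 20, 38), (19, 19, 39), (19, 21, 37), (20, 23, 34), (20, 20, 37), (20, 21, 36), (20, 22, 35),
  (19, 24, 34), (19, 20, 38), (19, 22, 36), (19, 21, 37), (20, 23, 34), (20, 20, 37), (20, 21, 36), (20, 22, 35),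
  (19, 24, 34), (19, 20, 38), (19, 22, 36), (19, 21, 37), (20, 23, 34), (20, 20, 37), (20, 21, 36), (20, 19, 38),
  (21, 20, 36), (21, 24, 32), (21, 22, 34), (21, 19, 37), (20, 23, 34), (20, 20, 37), (20, 21, 36), (20, 19, 38),
  (21, 20, 36), (21, 24, 32), (21, 22, 34), (21, 19, 37), (20, 23, 34), (20, 20, 37), (20, 21, 36), (20, 22, 35),
  (21, 20, 36), (21, 24, 32), (21, 22, 34), (21, 21, 35), (20, 23, 34), (20, 20, 37), (20, 21, 36), (20, 19, 38),
  (19, 24, 34), (19, 20, 38), (19, 19, 39), (19, 21, 37), (20, 24, 34), (20, 20, 38), (20, 22, 36), (20, 21, 37),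
  (21, 23, 34), (21, 20, 37), (21, 21, 36), (21, 22, 35), (20, 24, 34), (20, 20, 38), (20, 19, 39), (20, 21, 37),
  (19, 20, 39), (19, 24, 35), (19, 19, 40), (19, 21, 38), (20, 24, 34), (20, 20, 38), (20, 22, 36), (20, 21, 37),
  (19, 20, 39), (19, 24, 35), (19, 25, 34), (19, 21, 38), (20, 24, 34), (20, 20, 38), (20, 22, 36), (20, 21, 37),
  (19, 20, 39), (19, 24, 35), (19, 25, 34), (19, 21, 38), (20, 24, 34), (20, 20, 38), (20, 19, 39), (20, 21, 37),
  (21, 23, 34), (21, 20, 37), (21, 21, 36), (21, 19, 38), (20, 24, 34), (20, 20, 38), (20, 19, 39), (20, 21, 37),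
  (21, 23, 34), (21, 20, 37), (21, 21, 36), (21, 19, 38), (20, 24, 34), (20, 20, 38), (20, 22, 36), (20, 21, 37),
  (21, 23, 34), (21, 20, 37), (21, 21, 36), (21, 22, 35), (20, 24, 34), (20, 20, 38), (20, 22, 36), (20, 21, 37),
  (21, 23, 34), (21, 20, 37), (21, 21, 36), (21, 22, 35), (20, 20, 39), (20, 24, 35), (20, 25, 34), (20, 21, 38),
  (21, 24, 34), (21, 20, 38), (21, 22, 36), (21, 21, 37), (20, 20, 39), (20, 24, 35), (20, 19, 40), (20, 21, 38),
  (19, 20, 40), (19, 23, 37), (19, 21, 39), (19, 19, 41)]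

def tblA12 : List (ℕ × ℕ × ℕ) := [(20, 20, 39), (20, 24, 35), (20, 25, 34), (20, 21, 38), (19, 20, 40), (19, 23, 37), (19, 21, 39), (19, 22, 38),
  (20, 20, 39), (20, 24, 35), (20, 25, 34), (20, 21, 38), (19, 20, 40), (19, 23, 37), (19, 21, 39), (19, 22, 38),
  (20, 20, 39), (20, 24, 35), (20, 19, 40), (20, 21, 38), (21, 24, 34), (21, 20, 38), (21, 19, 39), (21, 21, 37),
  (20, 20, 39), (20, 24, 35), (20, 19, 40), (20, 21, 38), (21, 24, 34), (21, 20, 38), (21, 19, 39), (21, 21, 37),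
  (20, 20, 39), (20, 24, 35), (20, 25, 34), (20, 21, 38), (21, 24, 34), (21, 20, 38), (21, 22, 36), (21, 21, 37),
  (20, 20, 39), (20, 24, 35), (20, 25, 34), (20, 21, 38), (21, 24, 34), (21, 20, 38), (21, 22, 36), (21, 21, 37),
  (20, 20, 40), (20, 23, 37), (20, 21, 39), (20, 22, 38), (21, 20, 39), (21, 24, 35), (21, 25, 34), (21, 21, 38),
  (20, 20, 40), (20, 23, 37), (20, 21, 39), (20, 22, 38), (21, 20, 39), (21, 24, 35), (21, 25, 34), (21, 21, 38),
  (20, 24, 36), (20, 23, 37), (20, 21, 39), (20, 22, 38), (21, 23, 36), (21, 24, 35), (21, 25, 34), (21, 21, 38),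
  (20, 20, 40), (20, 23, 37), (20, 21, 39), (20, 22, 38), (19, 27, 34), (19, 20, 41), (19, 21, 40), (19, 26, 35),
  (23, 23, 34), (23, 20, 37), (23, 21, 36), (23, 22, 35), (21, 20, 39), (21, 24, 35), (21, 25, 34), (21, 21, 38),
  (20, 20, 40), (20, 23, 37), (20, 21, 39), (20, 19, 41), (21, 20, 39), (21, 24, 35), (21, 19, 40), (21, 21, 38),
  (20, 20, 40), (20, 23, 37), (20, 21, 39), (20, 22, 38), (21, 20, 39), (21, 24, 35), (21, 25, 34), (21, 21, 38),
  (20, 20, 40), (20, 23, 37), (20, 21, 39), (20, 22, 38), (21, 20, 39), (21, 24, 35), (21, 25, 34), (21, 21, 38),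
  (20, 27, 34), (20, 20, 41), (20, 21, 40), (20, 26, 35), (21, 20, 40), (21, 23, 37), (21, 21, 39), (21, 22, 38),
  (20, 27, 34), (20, 20, 41), (20, 21, 40), (20, 26, 35), (21, 20, 40), (21, 23, 37), (21, 21, 39), (21, 22, 38),
  (20, 27, 34), (20, 23, 38), (20, 21, 40), (20, 26, 35), (21, 24, 36), (21, 23, 37), (21, 21, 39), (21, 22, 38),
  (20, 27, 34), (20, 23, 38), (20, 21, 40), (20, 26, 35), (21, 24, 36), (21, 23, 37), (21, 21, 39), (21, 22, 38),
  (23, 24, 34), (23, 20, 38), (23, 22, 36), (23, 21, 37), (21, 20, 40), (21, 23, 37), (21, 21, 39), (21, 22, 38),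
  (23, 24, 34), (23, 20, 38), (23, 22, 36), (23, 21, 37), (21, 20, 40), (21, 23, 37), (21, 21, 39), (21, 22, 38),
  (23, 24, 34), (23, 23, 35), (23, 22, 36), (23, 21, 37), (21, 24, 36), (21, 23, 37), (21, 21, 39), (21, 22, 38),
  (20, 27, 34), (20, 20, 41), (20, 21, 40), (20, 26, 35), (21, 20, 40), (21, 23, 37), (21, 21, 39), (21, 22, 38),
  (23, 23, 36), (23, 24, 35), (23, 25, 34), (23, 21, 38), (21, 27, 34), (21, 23, 38), (21, 21, 40), (21, 26, 35),
  (20, 23, 39), (20, 20, 42), (20, 22, 40), (20, 21, 41)]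

def tblA13 : List (ℕ × ℕ × ℕ) := [(21, 27, 34), (21, 20, 41), (21, 21, 40), (21, 26, 35), (20, 23, 39), (20, 24, 38), (20, 22, 40), (20, 21, 41),
  (21, 27, 34), (21, 23, 38), (21, 21, 40), (21, 26, 35), (20, 23, 39), (20, 24, 38), (20, 22, 40), (20, 21, 41),
  (21, 27, 34), (21, 23, 38), (21, 21, 40), (21, 26, 35), (23, 20, 39), (23, 24, 35), (23, 25, 34), (23, 21, 38),
  (21, 27, 34), (21, 20, 41), (21, 21, 40), (21, 26, 35), (23, 20, 39), (23, 24, 35), (23, 25, 34), (23, 21, 38),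
  (21, 27, 34), (21, 20, 41), (21, 21, 40), (21, 26, 35), (23, 23, 36), (23, 24, 35), (23, 25, 34), (23, 21, 38),
  (21, 27, 34), (21, 23, 38), (21, 21, 40), (21, 26, 35), (23, 23, 36), (23, 24, 35), (23, 25, 34), (23, 21, 38),
  (21, 27, 34), (21, 23, 38), (21, 21, 40), (21, 26, 35), (23, 24, 36), (23, 23, 37), (23, 21, 39), (23, 22, 38),
  (21, 23, 39), (21, 24, 38), (21, 22, 40), (21, 21, 41), (20, 20, 43), (23, 23, 37), (23, 21, 39), (20, 21, 42),
  (21, 23, 39), (21, 20, 42), (21, 22, 40), (21, 21, 41), (20, 23, 40), (23, 23, 37), (23, 21, 39), (20, 21, 42),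
  (21, 23, 39), (21, 24, 38), (21, 22, 40), (21, 21, 41), (20, 23, 40), (23, 23, 37), (23, 21, 39), (20, 21, 42),
  (21, 23, 39), (21, 24, 38), (21, 22, 40), (21, 21, 41), (23, 20, 40), (23, 23, 37), (23, 21, 39), (23, 22, 38),
  (21, 23, 39), (21, 20, 42), (21, 22, 40), (21, 21, 41), (23, 20, 40), (23, 23, 37), (23, 21, 39), (23, 22, 38),
  (21, 23, 39), (21, 20, 42), (21, 22, 40), (21, 21, 41), (23, 24, 36), (23, 23, 37), (23, 21, 39), (23, 22, 38),
  (21, 23, 39), (21, 24, 38), (21, 22, 40), (21, 21, 41), (23, 24, 36), (23, 23, 37), (23, 21, 39), (23, 22, 38),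
  (21, 23, 39), (21, 24, 38), (21, 22, 40), (21, 21, 41), (23, 27, 34), (23, 23, 38), (23, 21, 40), (23, 26, 35),
  (21, 23, 40), (22, 24, 38), (22, 22, 40), (21, 21, 42), (23, 27, 34), (23, 23, 38), (23, 21, 40), (23, 26, 35),
  (21, 23, 40), (22, 24, 38), (22, 22, 40), (21, 21, 42), (23, 27, 34), (23, 23, 38), (23, 22, 39), (23, 26, 35),
  (21, 23, 40), (22, 24, 38), (22, 22, 40), (21, 22, 41), (20, 24, 40), (20, 23, 41), (20, 21, 43), (20, 22, 42),
  (21, 23, 40), (22, 24, 38), (22, 22, 40), (21, 21, 42), (23, 27, 34), (23, 23, 38), (23, 21, 40), (23, 26, 35),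
  (22, 23, 39), (22, 24, 38), (22, 22, 40), (22, 21, 41), (23, 27, 34), (23, 20, 41), (23, 21, 40), (23, 26, 35),
  (21, 20, 43), (22, 20, 42), (22, 22, 40), (21, 21, 42), (23, 27, 34), (23, 23, 38), (23, 21, 40), (23, 26, 35),
  (21, 23, 40), (22, 24, 38), (22, 22, 40), (21, 21, 42), (23, 27, 34), (23, 23, 38), (23, 21, 40), (23, 26, 35),
  (21, 23, 40), (22, 24, 38), (22, 22, 40), (21, 21, 42), (23, 23, 39), (23, 24, 38), (23, 22, 40), (23, 21, 41),
  (21, 24, 40), (21, 23, 41), (21, 21, 43), (21, 22, 42)]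

def tblA14 : List (ℕ × ℕ × ℕ) := [(23, 23, 39), (23, 24, 38), (23, 22, 40), (23, 21, 41), (21, 24, 40), (21, 23, 41), (21, 21, 43), (21, 22, 42),
  (23, 23, 39), (23, 24, 38), (23, 22, 40), (23, 25, 37), (21, 24, 40), (21, 23, 41), (21, 25, 39), (21, 22, 42),
  (23, 23, 39), (23, 24, 38), (23, 22, 40), (23, 25, 37), (21, 24, 40), (21, 23, 41), (21, 25, 39), (21, 22, 42),
  (23, 23, 39), (23, 24, 38), (23, 22, 40), (23, 21, 41), (22, 23, 40), (25, 23, 37), (25, 21, 39), (22, 21, 42),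
  (23, 23, 39), (23, 24, 38), (23, 22, 40), (23, 21, 41), (22, 23, 40), (25, 23, 37), (25, 21, 39), (22, 21, 42),
  (23, 23, 39), (23, 24, 38), (23, 22, 40), (23, 25, 37), (22, 23, 40), (25, 23, 37), (25, 26, 34), (22, 22, 41),
  (23, 23, 39), (23, 24, 38), (23, 22, 40), (23, 21, 41), (21, 24, 40), (21, 23, 41), (21, 21, 43), (21, 22, 42),
  (23, 23, 40), (24, 24, 38), (24, 22, 40), (23, 22, 41), (22, 24, 40), (22, 23, 41), (22, 25, 39), (22, 22, 42),
  (23, 23, 40), (24, 24, 38), (24, 22, 40), (23, 21, 42), (21, 29, 36), (21, 23, 42), (21, 22, 43), (21, 21, 44),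
  (23, 23, 40), (24, 24, 38), (24, 22, 40), (23, 22, 41), (21, 29, 36), (21, 23, 42), (21, 22, 43), (21, 28, 37),
  (23, 23, 40), (24, 24, 38), (24, 22, 40), (23, 22, 41), (21, 29, 36), (21, 23, 42), (21, 22, 43), (21, 28, 37),
  (23, 23, 40), (24, 24, 38), (24, 22, 40), (23, 21, 42), (22, 24, 40), (22, 23, 41), (22, 21, 43), (22, 22, 42),
  (23, 23, 40), (24, 24, 38), (24, 22, 40), (23, 21, 42), (22, 24, 40), (22, 23, 41), (22, 21, 43), (22, 22, 42),
  (23, 23, 40), (24, 24, 38), (24, 22, 40), (23, 22, 41), (22, 24, 40), (22, 23, 41), (22, 25, 39), (22, 22, 42),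
  (23, 23, 40), (24, 24, 38), (24, 22, 40), (23, 22, 41), (22, 24, 40), (22, 23, 41), (22, 25, 39), (22, 22, 42),
  (23, 24, 40), (23, 23, 41), (23, 25, 39), (23, 22, 42), (22, 29, 36), (22, 23, 42), (22, 22, 43), (22, 28, 37),
  (23, 24, 40), (23, 23, 41), (23, 21, 43), (23, 22, 42), (21, 23, 43), (21, 24, 42), (21, 21, 45), (21, 22, 44),
  (23, 24, 40), (23, 23, 41), (23, 25, 39), (23, 22, 42), (21, 23, 43), (21, 24, 42), (21, 26, 40), (21, 22, 44),
  (23, 24, 40), (23, 23, 41), (23, 25, 39), (23, 22, 42), (21, 23, 43), (21, 24, 42), (21, 26, 40), (21, 22, 44),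
  (23, 24, 40), (23, 23, 41), (23, 21, 43), (23, 22, 42), (22, 29, 36), (22, 23, 42), (22, 22, 43), (22, 21, 44),
  (23, 24, 40), (23, 23, 41), (23, 21, 43), (23, 22, 42), (22, 29, 36), (22, 23, 42), (22, 22, 43), (22, 21, 44),
  (23, 24, 40), (23, 23, 41), (23, 25, 39), (23, 22, 42), (22, 29, 36), (22, 23, 42), (22, 22, 43), (22, 28, 37),
  (23, 24, 40), (23, 23, 41), (23, 25, 39), (23, 22, 42), (22, 29, 36), (22, 23, 42), (22, 22, 43), (22, 28, 37),
  (23, 29, 36), (23, 23, 42), (23, 22, 43), (23, 28, 37)]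

def tblA15 : List (ℕ × ℕ × ℕ) := [(22, 23, 43), (22, 24, 42), (22, 26, 40), (22, 22, 44), (23, 29, 36), (23, 23, 42), (23, 22, 43), (23, 28, 37),
  (22, 23, 43), (22, 24, 42), (22, 26, 40), (22, 22, 44), (23, 29, 36), (23, 23, 42), (23, 25, 40), (23, 28, 37),
  (22, 23, 43), (22, 24, 42), (22, 26, 40), (22, 25, 41), (23, 29, 36), (23, 23, 42), (23, 22, 43), (23, 28, 37),
  (21, 24, 43), (21, 23, 44), (21, 22, 45), (21, 25, 42), (23, 29, 36), (23, 23, 42), (23, 22, 43), (23, 28, 37),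
  (25, 23, 40), (26, 24, 38), (26, 22, 40), (25, 22, 41), (23, 29, 36), (23, 23, 42), (23, 22, 43), (23, 21, 44),
  (22, 23, 43), (22, 24, 42), (22, 21, 45), (22, 22, 44), (23, 29, 36), (23, 23, 42), (23, 22, 43), (23, 28, 37),
  (22, 23, 43), (22, 24, 42), (22, 26, 40), (22, 22, 44), (23, 29, 36), (23, 23, 42), (23, 22, 43), (23, 28, 37),
  (22, 23, 43), (22, 24, 42), (22, 26, 40), (22, 22, 44), (23, 23, 43), (23, 24, 42), (23, 26, 40), (23, 22, 44),
  (22, 24, 43), (22, 23, 44), (22, 22, 45), (22, 25, 42), (23, 23, 43), (23, 24, 42), (23, 26, 40), (23, 22, 44),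
  (22, 24, 43), (22, 23, 44), (22, 22, 45), (22, 25, 42), (23, 23, 43), (23, 24, 42), (23, 26, 40), (23, 25, 41),
  (22, 24, 43), (22, 23, 44), (22, 28, 39), (22, 25, 42), (23, 23, 43), (23, 24, 42), (23, 26, 40), (23, 25, 41),
  (22, 24, 43), (22, 23, 44), (22, 28, 39), (22, 25, 42), (23, 23, 43), (23, 24, 42), (23, 26, 40), (23, 22, 44),
  (25, 24, 40), (25, 23, 41), (25, 25, 39), (25, 22, 42), (23, 23, 43), (23, 24, 42), (23, 26, 40), (23, 22, 44),
  (25, 24, 40), (25, 23, 41), (25, 25, 39), (25, 22, 42), (23, 23, 43), (23, 24, 42), (23, 26, 40), (23, 25, 41),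
  (25, 24, 40), (25, 23, 41), (25, 25, 39), (25, 26, 38), (23, 23, 43), (23, 24, 42), (23, 26, 40), (23, 22, 44),
  (22, 24, 43), (22, 23, 44), (22, 22, 45), (22, 25, 42), (23, 24, 43), (23, 23, 44), (23, 28, 39), (23, 25, 42),
  (25, 29, 36), (25, 23, 42), (25, 25, 40), (25, 28, 37), (23, 24, 43), (23, 23, 44), (23, 22, 45), (23, 25, 42),
  (22, 23, 45), (22, 24, 44), (22, 22, 46), (22, 26, 42), (23, 24, 43), (23, 23, 44), (23, 28, 39), (23, 25, 42),
  (22, 23, 45), (22, 24, 44), (22, 25, 43), (22, 26, 42), (23, 24, 43), (23, 23, 44), (23, 28, 39), (23, 25, 42),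
  (22, 23, 45), (22, 24, 44), (22, 25, 43), (22, 26, 42), (23, 24, 43), (23, 23, 44), (23, 22, 45), (23, 25, 42),
  (25, 29, 36), (25, 23, 42), (25, 22, 43), (25, 28, 37), (23, 24, 43), (23, 23, 44), (23, 22, 45), (23, 25, 42),
  (25, 29, 36), (25, 23, 42), (25, 22, 43), (25, 28, 37), (23, 24, 43), (23, 23, 44), (23, 28, 39), (23, 25, 42),
  (25, 29, 36), (25, 23, 42), (25, 25, 40), (25, 28, 37), (23, 24, 43), (23, 23, 44), (23, 28, 39), (23, 25, 42),
  (25, 29, 36), (25, 23, 42), (25, 25, 40), (25, 28, 37)]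

def tblB0 : List (ℕ × ℕ × ℕ) := [(3, 3, 6), (3, 3, 6), (3, 3, 6), (3, 3, 6), (3, 3, 6), (3, 3, 6), (3, 3, 6), (3, 3, 6),
  (3, 5, 5), (3, 5, 5), (3, 5, 5), (3, 5, 5), (3, 5, 5), (3, 5, 5), (3, 5, 5), (3, 5, 5),
  (3, 5, 6), (3, 5, 6), (3, 5, 6), (3, 5, 6), (3, 5, 6), (3, 5, 6), (3, 5, 6), (3, 5, 6),
  (3, 3, 9), (3, 3, 9), (3, 3, 9), (3, 3, 9), (3, 3, 9), (3, 3, 9), (3, 3, 9), (3, 3, 9),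
  (5, 5, 6), (3, 3, 10), (3, 10, 3), (5, 5, 6), (5, 5, 6), (5, 5, 6), (5, 5, 6), (5, 5, 6),
  (5, 6, 6), (3, 5, 9), (3, 5, 9), (3, 5, 9), (5, 3, 9), (5, 3, 9), (5, 6, 6), (5, 6, 6),
  (6, 6, 6), (3, 3, 12), (3, 5, 10), (3, 5, 10), (5, 3, 10), (5, 3, 10), (5, 10, 3), (6, 6, 6),
  (5, 5, 9), (3, 6, 10), (3, 6, 10), (3, 6, 10), (5, 5, 9), (5, 5, 9), (5, 5, 9), (5, 5, 9),
  (5, 5, 10), (5, 5, 10), (5, 5, 10), (5, 5, 10), (5, 5, 10), (5, 5, 10), (5, 5, 10), (5, 5, 10),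
  (5, 6, 10), (5, 6, 10), (5, 6, 10), (5, 6, 10), (5, 6, 10), (5, 6, 10), (5, 6, 10), (5, 6, 10),
  (5, 5, 12), (5, 5, 12), (5, 5, 12), (5, 5, 12), (5, 5, 12), (5, 5, 12), (5, 5, 12), (5, 5, 12),
  (5, 6, 12), (5, 6, 12), (5, 6, 12), (5, 6, 12), (5, 6, 12), (5, 6, 12), (5, 6, 12), (5, 6, 12),
  (6, 6, 12), (5, 9, 10), (5, 9, 10), (5, 9, 10), (6, 6, 12), (6, 6, 12), (6, 6, 12), (6, 6, 12),
  (6, 9, 10), (5, 5, 15), (5, 10, 10), (5, 10, 10), (6, 9, 10), (6, 9, 10), (6, 9, 10), (6, 9, 10),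
  (6, 10, 10), (5, 6, 15), (5, 6, 15), (5, 6, 15), (6, 5, 15), (6, 5, 15), (6, 10, 10), (6, 10, 10),
  (6, 6, 15), (5, 5, 17), (5, 10, 12), (5, 10, 12), (6, 6, 15), (6, 6, 15), (6, 6, 15), (6, 6, 15)]

def tblB1 : List (ℕ × ℕ × ℕ) := [(9, 9, 10), (6, 10, 12), (6, 10, 12), (6, 10, 12), (9, 9, 10), (9, 9, 10), (9, 9, 10), (9, 9, 10),
  (9, 10, 10), (6, 6, 17), (6, 17, 6), (9, 10, 10), (9, 10, 10), (9, 10, 10), (9, 10, 10), (9, 10, 10),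
  (9, 9, 12), (6, 6, 18), (6, 9, 15), (6, 9, 15), (9, 6, 15), (9, 6, 15), (9, 9, 12), (9, 9, 12),
  (9, 10, 12), (6, 10, 15), (6, 10, 15), (6, 10, 15), (9, 10, 12), (9, 10, 12), (9, 10, 12), (9, 10, 12),
  (10, 10, 12), (10, 10, 12), (10, 10, 12), (10, 10, 12), (10, 10, 12), (10, 10, 12), (10, 10, 12), (10, 10, 12),
  (9, 9, 15), (9, 9, 15), (9, 9, 15), (9, 9, 15), (9, 9, 15), (9, 9, 15), (9, 9, 15), (9, 9, 15),
  (9, 10, 15), (9, 10, 15), (9, 10, 15), (9, 10, 15), (9, 10, 15), (9, 10, 15), (9, 10, 15), (9, 10, 15),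
  (9, 9, 17), (9, 9, 17), (9, 9, 17), (9, 9, 17), (9, 9, 17), (9, 9, 17), (9, 9, 17), (9, 9, 17),
  (9, 9, 18), (9, 9, 18), (9, 9, 18), (9, 9, 18), (9, 9, 18), (9, 9, 18), (9, 9, 18), (9, 9, 18),
  (9, 10, 18), (9, 10, 18), (9, 10, 18), (9, 10, 18), (9, 10, 18), (9, 10, 18), (9, 10, 18), (9, 10, 18),
  (9, 9, 20), (9, 9, 20), (9, 9, 20), (9, 9, 20), (9, 9, 20), (9, 9, 20), (9, 9, 20), (9, 9, 20),
  (9, 10, 20), (9, 10, 20), (9, 10, 20), (9, 10, 20), (9, 10, 20), (9, 10, 20), (9, 10, 20), (9, 10, 20),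
  (10, 10, 20), (10, 10, 20), (10, 10, 20), (10, 10, 20), (10, 10, 20), (10, 10, 20), (10, 10, 20), (10, 10, 20),
  (12, 12, 17), (9, 9, 23), (9, 12, 20), (9, 12, 20), (12, 9, 20), (12, 9, 20), (12, 12, 17), (12, 12, 17),
  (10, 12, 20), (9, 9, 24), (9, 10, 23), (9, 10, 23), (10, 9, 23), (10, 9, 23), (10, 12, 20), (10, 12, 20),
  (10, 10, 23), (9, 10, 24), (9, 10, 24), (9, 10, 24), (10, 9, 24), (10, 9, 24), (10, 10, 23), (10, 10, 23)]

lemma tblA0_ok : runT chkA 0 tblA0 = true := by decide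
lemma tblA0_len : tblA0.length = 188 := by decide
lemma tblA1_ok : runT chkA 188 tblA1 = true := by decide
lemma tblA1_len : tblA1.length = 188 := by decide
lemma tblA2_ok : runT chkA 376 tblA2 = true := by decide
lemma tblA2_len : tblA2.length = 188 := by decide
lemma tblA3_ok : runT chkA 564 tblA3 = true := by decide
lemma tblA3_len : tblA3.length = 188 := by decide
lemma tblA4_ok : runT chkA 752 tblA4 = true := by decide
lemma tblA4_len : tblA4.length = 188 := by decide
lemma tblA5_ok : runT chkA 940 tblA5 = true := by decide
lemma tblA5_len : tblA5.length = 188 := by decide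
lemma tblA6_ok : runT chkA 1128 tblA6 = true := by decide
lemma tblA6_len : tblA6.length = 188 := by decide
lemma tblA7_ok : runT chkA 1316 tblA7 = true := by decide
lemma tblA7_len : tblA7.length = 188 := by decide
lemma tblA8_ok : runT chkA 1504 tblA8 = true := by decide
lemma tblA8_len : tblA8.length = 188 := by decide
lemma tblA9_ok : runT chkA 1692 tblA9 = true := by decide
lemma tblA9_len : tblA9.length = 188 := by decide
lemma tblA10_ok : runT chkA 1880 tblA10 = true := by decide
lemma tblA10_len : tblA10.length = 188 := by decide
lemma tblA11_ok : runT chkA 2068 tblA11 = true := by decide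
lemma tblA11_len : tblA11.length = 188 := by decide
lemma tblA12_ok : runT chkA 2256 tblA12 = true := by decide
lemma tblA12_len : tblA12.length = 188 := by decide
lemma tblA13_ok : runT chkA 2444 tblA13 = true := by decide
lemma tblA13_len : tblA13.length = 188 := by decide
lemma tblA14_ok : runT chkA 2632 tblA14 = true := by decide
lemma tblA14_len : tblA14.length = 188 := by decide
lemma tblA15_ok : runT chkA 2820 tblA15 = true := by decide
lemma tblA15_len : tblA15.length = 188 := by decide
lemma tblB0_ok : runT chkB 0 tblB0 = true := by decide
lemma tblB0_len : tblB0.length = 128 := by decide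
lemma tblB1_ok : runT chkB 128 tblB1 = true := by decide
lemma tblB1_len : tblB1.length = 128 := by decide

lemma coverA : ∀ j, j < 3008 → ∃ w, chkA j w = true := by
  intro j hj
  rcases (by omega : j < 188 ∨ 188 ≤ j) with hc0 | hc0
  · exact runT_sound chkA tblA0 0 tblA0_ok j (by omega) (by rw [tblA0_len]; omega)
  rcases (by omega : j < 376 ∨ 376 ≤ j) with hc1 | hc1
  · exact runT_sound chkA tblA1 188 tblA1_ok j (by omega) (by rw [tblA1_len]; omega)
  rcases (by omega : j < 564 ∨ 564 ≤ j) with hc2 | hc2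
  · exact runT_sound chkA tblA2 376 tblA2_ok j (by omega) (by rw [tblA2_len]; omega)
  rcases (by omega : j < 752 ∨ 752 ≤ j) with hc3 | hc3
  · exact runT_sound chkA tblA3 564 tblA3_ok j (by omega) (by rw [tblA3_len]; omega)
  rcases (by omega : j < 940 ∨ 940 ≤ j) with hc4 | hc4
  · exact runT_sound chkA tblA4 752 tblA4_ok j (by omega) (by rw [tblA4_len]; omega)
  rcases (by omega : j < 1128 ∨ 1128 ≤ j) with hc5 | hc5
  · exact runT_sound chkA tblA5 940 tblA5_ok j (by omega) (by rw [tblA5_len]; omega)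
  rcases (by omega : j < 1316 ∨ 1316 ≤ j) with hc6 | hc6
  · exact runT_sound chkA tblA6 1128 tblA6_ok j (by omega) (by rw [tblA6_len]; omega)
  rcases (by omega : j < 1504 ∨ 1504 ≤ j) with hc7 | hc7
  · exact runT_sound chkA tblA7 1316 tblA7_ok j (by omega) (by rw [tblA7_len]; omega)
  rcases (by omega : j < 1692 ∨ 1692 ≤ j) with hc8 | hc8
  · exact runT_sound chkA tblA8 1504 tblA8_ok j (by omega) (by rw [tblA8_len]; omega)
  rcases (by omega : j < 1880 ∨ 1880 ≤ j) with hc9 | hc9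
  · exact runT_sound chkA tblA9 1692 tblA9_ok j (by omega) (by rw [tblA9_len]; omega)
  rcases (by omega : j < 2068 ∨ 2068 ≤ j) with hc10 | hc10
  · exact runT_sound chkA tblA10 1880 tblA10_ok j (by omega) (by rw [tblA10_len]; omega)
  rcases (by omega : j < 2256 ∨ 2256 ≤ j) with hc11 | hc11
  · exact runT_sound chkA tblA11 2068 tblA11_ok j (by omega) (by rw [tblA11_len]; omega)
  rcases (by omega : j < 2444 ∨ 2444 ≤ j) with hc12 | hc12
  · exact runT_sound chkA tblA12 2256 tblA12_ok j (by omega) (by rw [tblA12_len]; omega)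
  rcases (by omega : j < 2632 ∨ 2632 ≤ j) with hc13 | hc13
  · exact runT_sound chkA tblA13 2444 tblA13_ok j (by omega) (by rw [tblA13_len]; omega)
  rcases (by omega : j < 2820 ∨ 2820 ≤ j) with hc14 | hc14
  · exact runT_sound chkA tblA14 2632 tblA14_ok j (by omega) (by rw [tblA14_len]; omega)
  exact runT_sound chkA tblA15 2820 tblA15_ok j (by omega) (by rw [tblA15_len]; omega)

lemma coverB : ∀ j, j < 256 → ∃ w, chkB j w = true := by
  intro j hj
  rcases (by omega : j < 128 ∨ 128 ≤ j) with hc0 | hc0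
  · exact runT_sound chkB tblB0 0 tblB0_ok j (by omega) (by rw [tblB0_len]; omega)
  exact runT_sound chkB tblB1 128 tblB1_ok j (by omega) (by rw [tblB1_len]; omega)


lemma baseA (t d1 d2 d3 e1 e2 e3 : ℕ) (h44 : 44 ≤ t) (h90 : t ≤ 90)
    (hd1 : d1 ≤ 1) (hd2 : d2 ≤ 1) (hd3 : d3 ≤ 1)
    (he1 : e1 ≤ 1) (he2 : e2 ≤ 1) (he3 : e3 ≤ 1) :
    ∃ a b c, (t + 2 - (d1 + d2 + d3) - (d1 + d2 + d3 + 2) / 3) / 4 + d1 ≤ a ∧ (t + 2 - (d1 + d2 + d3) - (d1 + d2 + d3 + 2) / 3) / 4 + d2 ≤ b ∧ (t + 2 - (d1 + d2 + d3) - (d1 + d2 + d3 + 2) / 3) / 4 + d3 ≤ c ∧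
      E a = e1 ∧ E b = e2 ∧ E c = e3 ∧ a + b + c = t := by
  obtain ⟨w, hw⟩ := coverA ((t - 44) * 64 + d1 * 32 + d2 * 16 + d3 * 8 + e1 * 4 + e2 * 2 + e3) (by omega)
  obtain ⟨a, b, c⟩ := w
  simp only [chkA] at hw
  obtain ⟨hA1, hA2, hA3, hE1, hE2, hE3, hS⟩ := chk_sound hw
  have q64 : ((t - 44) * 64 + d1 * 32 + d2 * 16 + d3 * 8 + e1 * 4 + e2 * 2 + e3) / 64 = t - 44 := by omega
  have q32 : ((t - 44) * 64 + d1 * 32 + d2 * 16 + d3 * 8 + e1 * 4 + e2 * 2 + e3) / 32 % 2 = d1 := by omega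
  have q16 : ((t - 44) * 64 + d1 * 32 + d2 * 16 + d3 * 8 + e1 * 4 + e2 * 2 + e3) / 16 % 2 = d2 := by omega
  have q8 : ((t - 44) * 64 + d1 * 32 + d2 * 16 + d3 * 8 + e1 * 4 + e2 * 2 + e3) / 8 % 2 = d3 := by omega
  have q4 : ((t - 44) * 64 + d1 * 32 + d2 * 16 + d3 * 8 + e1 * 4 + e2 * 2 + e3) / 4 % 2 = e1 := by omega
  have q2 : ((t - 44) * 64 + d1 * 32 + d2 * 16 + d3 * 8 + e1 * 4 + e2 * 2 + e3) / 2 % 2 = e2 := by omega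
  have q1 : ((t - 44) * 64 + d1 * 32 + d2 * 16 + d3 * 8 + e1 * 4 + e2 * 2 + e3) % 2 = e3 := by omega
  have q0 : 44 + (t - 44) = t := by omega
  simp only [q64, q32, q16, q8, q4, q2, q1, q0] at hA1 hA2 hA3 hE1 hE2 hE3 hS
  exact ⟨a, b, c, hA1, hA2, hA3, hE1, hE2, hE3, hS⟩

lemma baseB (t d1 d2 d3 : ℕ) (h12 : 12 ≤ t) (h43 : t ≤ 43)
    (hd1 : d1 ≤ 1) (hd2 : d2 ≤ 1) (hd3 : d3 ≤ 1) :
    ∃ a b c, t / 4 - (d1 + d2 + d3 + 2) / 3 + d1 ≤ a ∧ t / 4 - (d1 + d2 + d3 + 2) / 3 + d2 ≤ b ∧ t / 4 - (d1 + d2 + d3 + 2) / 3 + d3 ≤ c ∧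
      E a = 0 ∧ E b = 0 ∧ E c = 0 ∧ a + b + c = t := by
  obtain ⟨w, hw⟩ := coverB ((t - 12) * 8 + d1 * 4 + d2 * 2 + d3) (by omega)
  obtain ⟨a, b, c⟩ := w
  simp only [chkB] at hw
  obtain ⟨hA1, hA2, hA3, hE1, hE2, hE3, hS⟩ := chk_sound hw
  have q8 : ((t - 12) * 8 + d1 * 4 + d2 * 2 + d3) / 8 = t - 12 := by omega
  have q4 : ((t - 12) * 8 + d1 * 4 + d2 * 2 + d3) / 4 % 2 = d1 := by omega
  have q2 : ((t - 12) * 8 + d1 * 4 + d2 * 2 + d3) / 2 % 2 = d2 := by omega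
  have q1 : ((t - 12) * 8 + d1 * 4 + d2 * 2 + d3) % 2 = d3 := by omega
  have q0 : 12 + (t - 12) = t := by omega
  simp only [q8, q4, q2, q1, q0] at hA1 hA2 hA3 hE1 hE2 hE3 hS
  exact ⟨a, b, c, hA1, hA2, hA3, hE1, hE2, hE3, hS⟩

lemma main : ∀ (t m1 m2 m3 e1 e2 e3 : ℕ), e1 ≤ 1 → e2 ≤ 1 → e3 ≤ 1 →
    m1 ≤ m2 + 1 → m2 ≤ m1 + 1 → m1 ≤ m3 + 1 → m3 ≤ m1 + 1 → m2 ≤ m3 + 1 → m3 ≤ m2 + 1 →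
    m1 + m2 + m3 + m1 ≤ t + 2 → m1 + m2 + m3 + m2 ≤ t + 2 → m1 + m2 + m3 + m3 ≤ t + 2 →
    (44 ≤ t ∨ (e1 = 0 ∧ e2 = 0 ∧ e3 = 0 ∧ 3 ≤ m1 ∧ 4 * m1 ≤ t ∧ 4 * m2 ≤ t ∧ 4 * m3 ≤ t)) →
    ∃ a b c, m1 ≤ a ∧ m2 ≤ b ∧ m3 ≤ c ∧ E a = e1 ∧ E b = e2 ∧ E c = e3 ∧ a + b + c = t := by
  intro t
  induction t using Nat.strong_induction_on with
  | _ t ih =>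
  intro m1 m2 m3 e1 e2 e3 he1 he2 he3 h12 h21 h13 h31 h23 h32 hv1 hv2 hv3 hdisj
  by_cases hbig : 91 ≤ t
  · -- recursive halving step
    obtain ⟨a', b', c', ha1, hb1, hc1, hea, heb, hec, hsum⟩ :=
      ih ((t - (m1 % 2 + m2 % 2 + (t + m1 + m2) % 2)) / 2) (by omega)
        ((m1 + 1 - m1 % 2) / 2) ((m2 + 1 - m2 % 2) / 2) ((m3 + 1 - (t + m1 + m2) % 2) / 2)
        ((e1 + m1 % 2) % 2) ((e2 + m2 % 2) % 2) ((e3 + (t + m1 + m2) % 2) % 2)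
        (by omega) (by omega) (by omega) (by omega) (by omega) (by omega) (by omega)
        (by omega) (by omega) (by omega) (by omega) (by omega) (Or.inl (by omega))
    refine ⟨2 * a' + m1 % 2, 2 * b' + m2 % 2, 2 * c' + (t + m1 + m2) % 2,
      by omega, by omega, by omega, ?_, ?_, ?_, by omega⟩
    · rcases (by omega : m1 % 2 = 0 ∨ m1 % 2 = 1) with h | h <;> rw [h] at hea ⊢
      · rw [Nat.add_zero, E_two_mul, hea]; omega
      · rw [E_two_mul_add_one, hea]; omega
    · rcases (by omega : m2 % 2 = 0 ∨ m2 % 2 = 1) with h | h <;> rw [h] at heb ⊢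
      · rw [Nat.add_zero, E_two_mul, heb]; omega
      · rw [E_two_mul_add_one, heb]; omega
    · rcases (by omega : (t + m1 + m2) % 2 = 0 ∨ (t + m1 + m2) % 2 = 1) with h | h <;>
        rw [h] at hec ⊢
      · rw [Nat.add_zero, E_two_mul, hec]; omega
      · rw [E_two_mul_add_one, hec]; omega
  · -- base cases via tables
    obtain ⟨q, d1, d2, d3, hd1, hd2, hd3, hm1, hm2, hm3⟩ :
        ∃ q d1 d2 d3 : ℕ, d1 ≤ 1 ∧ d2 ≤ 1 ∧ d3 ≤ 1 ∧
          m1 = q + d1 ∧ m2 = q + d2 ∧ m3 = q + d3 := by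
      rcases le_total m1 m2 with h | h <;> rcases le_total m1 m3 with h' | h' <;>
        rcases le_total m2 m3 with h'' | h'' <;>
        first
          | exact ⟨m1, 0, m2 - m1, m3 - m1, by omega, by omega, by omega,
              by omega, by omega, by omega⟩
          | exact ⟨m2, m1 - m2, 0, m3 - m2, by omega, by omega, by omega,
              by omega, by omega, by omega⟩
          | exact ⟨m3, m1 - m3, m2 - m3, 0, by omega, by omega, by omega,
              by omega, by omega, by omega⟩
    by_cases h44 : 44 ≤ t
    · obtain ⟨a, b, c, hA1, hA2, hA3, hE1, hE2, hE3, hS⟩ :=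
        baseA t d1 d2 d3 e1 e2 e3 h44 (by omega) hd1 hd2 hd3 he1 he2 he3
      exact ⟨a, b, c, by omega, by omega, by omega, hE1, hE2, hE3, hS⟩
    · rcases hdisj with h44' | ⟨hz1, hz2, hz3, h3m, h4m1, h4m2, h4m3⟩
      · exact absurd h44' h44
      subst hz1; subst hz2; subst hz3
      obtain ⟨a, b, c, hA1, hA2, hA3, hE1, hE2, hE3, hS⟩ :=
        baseB t d1 d2 d3 (by omega) (by omega) hd1 hd2 hd3
      exact ⟨a, b, c, by omega, by omega, by omega, hE1, hE2, hE3, hS⟩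

lemma key (M s : ℕ) (h3 : 3 ≤ M) (hs : 4 * M ≤ s) :
    ∃ a b c, M ≤ a ∧ M ≤ b ∧ M ≤ c ∧ E a = 0 ∧ E b = 0 ∧ E c = 0 ∧ a + b + c = s :=
  main s M M M 0 0 0 (by omega) (by omega) (by omega) (by omega) (by omega) (by omega)
    (by omega) (by omega) (by omega) (by omega) (by omega) (by omega)
    (Or.inr ⟨rfl, rfl, rfl, h3, hs, hs, hs⟩)

end EvilThree

theorem evil_combination_to_three (m n : ℕ) (hn : 1 ≤ n)
    (h : n ∈ AddSubmonoid.closure {k : ℕ | IsEvil k ∧ m ≤ k}) :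
    (∃ a : ℕ, IsEvil a ∧ m ≤ a ∧ n = a) ∨
    (∃ a b : ℕ, IsEvil a ∧ IsEvil b ∧ m ≤ a ∧ m ≤ b ∧ n = a + b) ∨
    (∃ a b c : ℕ, IsEvil a ∧ IsEvil b ∧ IsEvil c ∧ m ≤ a ∧ m ≤ b ∧ m ≤ c ∧
      n = a + b + c) := by
  classical
  set M := max m 3 with hM
  have hm3 : 3 ≤ M := le_max_right m 3
  have hmM : m ≤ M := le_max_left m 3
  set cnd : ℕ → Prop := fun x => x = 0 ∨ (EvilThree.E x = 0 ∧ M ≤ x) with hcnd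
  set P : ℕ → Prop := fun x => ∃ a b c, cnd a ∧ cnd b ∧ cnd c ∧ a + b + c = x with hPdef
  have addone : ∀ z w, P z → cnd w → P (z + w) := by
    intro z w hz hw
    obtain ⟨a, b, c, ca, cb, cc, hs⟩ := hz
    rcases hw with rfl | hw
    · exact ⟨a, b, c, ca, cb, cc, by omega⟩
    rcases ca with rfl | ha
    · exact ⟨w, b, c, Or.inr hw, cb, cc, by omega⟩
    rcases cb with rfl | hb
    · exact ⟨a, w, c, Or.inr ha, Or.inr hw, cc, by omega⟩
    rcases cc with rfl | hc
    · exact ⟨a, b, w, Or.inr ha, Or.inr hb, Or.inr hw, by omega⟩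
    · obtain ⟨p, q, r, hp1, hq1, hr1, hp0, hq0, hr0, hpqr⟩ :=
        EvilThree.key M (z + w) hm3 (by omega)
      exact ⟨p, q, r, Or.inr ⟨hp0, hp1⟩, Or.inr ⟨hq0, hq1⟩, Or.inr ⟨hr0, hr1⟩, hpqr⟩
  have hPn : P n := by
    refine AddSubmonoid.closure_induction (motive := fun x _ => P x) ?_ ?_ ?_ h
    · intro x hx
      obtain ⟨hev, hge⟩ := hx
      have hevE : EvilThree.E x = 0 := hev
      rcases Nat.eq_zero_or_pos x with rfl | hpos
      · exact ⟨0, 0, 0, Or.inl rfl, Or.inl rfl, Or.inl rfl, rfl⟩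
      · have hx3 : 3 ≤ x := by
          rcases (by omega : x = 1 ∨ x = 2 ∨ 3 ≤ x) with rfl | rfl | hgood
          · have : EvilThree.E 1 = 1 := by rw [← EvilThree.tm_eq 1 1 le_rfl]; decide
            omega
          · have : EvilThree.E 2 = 1 := by rw [← EvilThree.tm_eq 2 2 le_rfl]; decide
            omega
          · exact hgood
        exact ⟨x, 0, 0, Or.inr ⟨hevE, max_le hge hx3⟩, Or.inl rfl, Or.inl rfl, by omega⟩
    · exact ⟨0, 0, 0, Or.inl rfl, Or.inl rfl, Or.inl rfl, rfl⟩
    · intro x y hx hy px py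
      obtain ⟨b1, b2, b3, c1, c2, c3, hs⟩ := py
      have h3 := addone _ b3 (addone _ b2 (addone _ b1 px c1) c2) c3
      have hxy : x + b1 + b2 + b3 = x + y := by omega
      rwa [hxy] at h3
  obtain ⟨a, b, c, ca, cb, cc, hsum⟩ := hPn
  rcases ca with rfl | ⟨ea, ma⟩ <;> rcases cb with rfl | ⟨eb, mb⟩ <;>
    rcases cc with rfl | ⟨ec, mc⟩
  · exfalso; omega
  · exact Or.inl ⟨c, ec, by omega, by omega⟩
  · exact Or.inl ⟨b, eb, by omega, by omega⟩
  · exact Or.inr (Or.inl ⟨b, c, eb, ec, by omega, by omega, by omega⟩)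
  · exact Or.inl ⟨a, ea, by omega, by omega⟩
  · exact Or.inr (Or.inl ⟨a, c, ea, ec, by omega, by omega, by omega⟩)
  · exact Or.inr (Or.inl ⟨a, b, ea, eb, by omega, by omega, by omega⟩)
  · exact Or.inr (Or.inr ⟨a, b, c, ea, eb, ec, by omega, by omega, by omega, by omega⟩)
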